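/- arXiv:2506.15149 — 4 statements merged into one kernel-verified Lean document; each statement's English description precedes it below -/
import Mathlib

section
/- The closure of ℍ_μ in ℂ⁴ is a compact, polynomially convex set. -/
noncomputable section

open Complex

set_option synthInstance.maxHeartbeats 1000000
set_option maxHeartbeats 1000000



/-- The expression `1 - x₁ z₁ - x₂ z₂ + x₃ z₁ z₂`. -/
def hexDen (x : ℂ × ℂ × ℂ) (z₁ z₂ : ℂ) : ℂ :=
  1 - x.1 * z₁ - x.2.1 * z₂ + x.2.2 * z₁ * z₂

/-- The tetrablock `𝔼 ⊆ ℂ³`. -/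
def tetrablock : Set (ℂ × ℂ × ℂ) :=
  {x | ∀ z₁ z₂ : ℂ, ‖z₁‖ ≤ 1 → ‖z₂‖ ≤ 1 → hexDen x z₁ z₂ ≠ 0}

/-- The distinguished boundary `b𝔼` of the tetrablock. -/
def bE : Set (ℂ × ℂ × ℂ) :=
  {x | x.1 = (starRingEnd ℂ) x.2.1 * x.2.2 ∧ ‖x.2.2‖ = 1 ∧ ‖x.2.1‖ ≤ 1}

/-- The linear fractional map `ψ_{z₁,z₂}(a, x₁, x₂, x₃)`. -/
def psi (z₁ z₂ : ℂ) (q : ℂ × ℂ × ℂ × ℂ) : ℂ :=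
  q.1 * ((Real.sqrt ((1 - ‖z₁‖ ^ 2) * (1 - ‖z₂‖ ^ 2)) : ℝ) : ℂ) / hexDen q.2 z₁ z₂

/-- `sup_{z₁,z₂ ∈ 𝔻} |ψ_{z₁,z₂}(q)|`. -/
def supPsi (q : ℂ × ℂ × ℂ × ℂ) : ℝ :=
  sSup {r : ℝ | ∃ z₁ z₂ : ℂ, ‖z₁‖ < 1 ∧ ‖z₂‖ < 1 ∧ r = ‖psi z₁ z₂ q‖}

/-- The function `K_*` on the tetrablock. -/
def Kstar (x : ℂ × ℂ × ℂ) : ℝ :=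
  sSup {r : ℝ | ∃ z₁ z₂ : ℂ, ‖z₁‖ < 1 ∧ ‖z₂‖ < 1 ∧
    r = Real.sqrt ((1 - ‖z₁‖ ^ 2) * (1 - ‖z₂‖ ^ 2)) / ‖hexDen x z₁ z₂‖}

/-- The hexablock `ℍ ⊆ ℂ⁴`. -/
def hexablock : Set (ℂ × ℂ × ℂ × ℂ) :=
  {q | q.2 ∈ tetrablock ∧ supPsi q < 1}

/-- Operator norm of a `2 × 2` complex matrix acting on Euclidean `ℂ²`. -/
def opNorm2 (A : Matrix (Fin 2) (Fin 2) ℂ) : ℝ :=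
  ‖Matrix.toEuclideanCLM (𝕜 := ℂ) A‖

/-- `π(A) = (a₂₁, a₁₁, a₂₂, det A)`. -/
def piMap (A : Matrix (Fin 2) (Fin 2) ℂ) : ℂ × ℂ × ℂ × ℂ :=
  (A 1 0, A 0 0, A 1 1, A.det)

/-- The structured singular value `μ_hexa`, valued in `[0, ∞]`;
the infimum over the empty set is `∞`, whose inverse is `0`. -/
def muHexa (A : Matrix (Fin 2) (Fin 2) ℂ) : ENNReal :=
  (sInf {r : ENNReal | ∃ X : Matrix (Fin 2) (Fin 2) ℂ,
      X 1 0 = 0 ∧ (1 - A * X).det = 0 ∧ r = ENNReal.ofReal (opNorm2 X)})⁻¹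

/-- The μ-hexablock `ℍ_μ`. -/
def hexMu : Set (ℂ × ℂ × ℂ × ℂ) :=
  {q | ∃ A : Matrix (Fin 2) (Fin 2) ℂ, muHexa A < 1 ∧ piMap A = q}

/-- The normed hexablock `ℍ_N`. -/
def hexN : Set (ℂ × ℂ × ℂ × ℂ) :=
  {q | ∃ A : Matrix (Fin 2) (Fin 2) ℂ, opNorm2 A < 1 ∧ piMap A = q}

/-- `ℍ_p = π(𝒰(2))`. -/
def hexP : Set (ℂ × ℂ × ℂ × ℂ) :=
  {q | ∃ U : Matrix (Fin 2) (Fin 2) ℂ, U ∈ Matrix.unitaryGroup (Fin 2) ℂ ∧ piMap U = q}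

/-- Evaluation of a polynomial in four variables at a point of `ℂ⁴`. -/
def evalPoly4 (p : MvPolynomial (Fin 4) ℂ) (q : ℂ × ℂ × ℂ × ℂ) : ℂ :=
  MvPolynomial.eval ![q.1, q.2.1, q.2.2.1, q.2.2.2] p

/-- Polynomial convexity of a subset of `ℂ⁴`. -/
def PolyConvex (K : Set (ℂ × ℂ × ℂ × ℂ)) : Prop :=
  ∀ z ∉ K, ∃ p : MvPolynomial (Fin 4) ℂ,
    (∀ w ∈ K, ‖evalPoly4 p w‖ ≤ 1) ∧ 1 < ‖evalPoly4 p z‖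

/-- Polynomial convex hull of a subset of `ℂ⁴`. -/
def polyHull (K : Set (ℂ × ℂ × ℂ × ℂ)) : Set (ℂ × ℂ × ℂ × ℂ) :=
  {z | ∀ p : MvPolynomial (Fin 4) ℂ,
    ‖evalPoly4 p z‖ ≤ sSup {r : ℝ | ∃ w ∈ K, r = ‖evalPoly4 p w‖}}

/-- The pentablock `𝒫 ⊆ ℂ³`. -/
def pentablock : Set (ℂ × ℂ × ℂ) :=
  {q | ∃ A : Matrix (Fin 2) (Fin 2) ℂ, opNorm2 A < 1 ∧ (A 1 0, A 0 0 + A 1 1, A.det) = q}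

-- ======== auxiliary machinery ========

def uptri (α β γ : ℂ) : Matrix (Fin 2) (Fin 2) ℂ := !![α, β; 0, γ]

def Gq (q : ℂ × ℂ × ℂ × ℂ) (X : Matrix (Fin 2) (Fin 2) ℂ) : ℂ :=
  1 - q.2.1 * X 0 0 - q.1 * X 0 1 - q.2.2.1 * X 1 1 + q.2.2.2 * (X 0 0 * X 1 1)

def bval (q : ℂ × ℂ × ℂ × ℂ) (α β γ : ℂ) : ℂ := -(q.2.1 * α + q.1 * β + q.2.2.1 * γ)
def cval (q : ℂ × ℂ × ℂ × ℂ) (α γ : ℂ) : ℂ := q.2.2.2 * (α * γ)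

lemma detFormula (A X : Matrix (Fin 2) (Fin 2) ℂ) (hX : X 1 0 = 0) :
    (1 - A * X).det = Gq (piMap A) X := by
  simp [Gq, piMap, Matrix.det_fin_two, Matrix.sub_apply, Matrix.mul_apply,
    Fin.sum_univ_two, Matrix.one_apply, hX]
  ring

lemma Gq_smul_uptri (q : ℂ × ℂ × ℂ × ℂ) (s α β γ : ℂ) :
    Gq q (s • uptri α β γ) = 1 + bval q α β γ * s + cval q α γ * s ^ 2 := by
  simp [Gq, uptri, bval, cval, Matrix.smul_apply]
  ring

lemma uptri_repr (X : Matrix (Fin 2) (Fin 2) ℂ) (h : X 1 0 = 0) :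
    X = uptri (X 0 0) (X 0 1) (X 1 1) := by
  ext i j
  fin_cases i <;> fin_cases j <;> simp [uptri, h]

lemma uptri_smul (s α β γ : ℂ) : s • uptri α β γ = uptri (s * α) (s * β) (s * γ) := by
  ext i j
  fin_cases i <;> fin_cases j <;> simp [uptri]

-- ======== norms ========

lemma opNorm2_nonneg (X : Matrix (Fin 2) (Fin 2) ℂ) : 0 ≤ opNorm2 X := norm_nonneg _

lemma opNorm2_smul (s : ℂ) (X : Matrix (Fin 2) (Fin 2) ℂ) :
    opNorm2 (s • X) = ‖s‖ * opNorm2 X := by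
  unfold opNorm2
  rw [map_smul]
  exact norm_smul s (Matrix.toEuclideanCLM (𝕜 := ℂ) X)

lemma euclid_norm (w : Fin 2 → ℂ) :
    ‖((WithLp.equiv 2 (Fin 2 → ℂ)).symm w : EuclideanSpace ℂ (Fin 2))‖
      = Real.sqrt (‖w 0‖ ^ 2 + ‖w 1‖ ^ 2) := by
  rw [EuclideanSpace.norm_eq]
  simp [Fin.sum_univ_two]

lemma le_sqrt_add₁ (a b : ℝ) (hb : 0 ≤ b) : a ≤ Real.sqrt (a ^ 2 + b) := by
  rcases le_or_gt a 0 with h | h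
  · exact h.trans (Real.sqrt_nonneg _)
  · have h2 := Real.sqrt_le_sqrt (show a ^ 2 ≤ a ^ 2 + b by linarith)
    rwa [Real.sqrt_sq h.le] at h2

lemma toEuclideanCLM_piLp_equiv_symm' (M : Matrix (Fin 2) (Fin 2) ℂ) (w : Fin 2 → ℂ) :
    Matrix.toEuclideanCLM (𝕜 := ℂ) M ((WithLp.equiv 2 (Fin 2 → ℂ)).symm w)
      = (WithLp.equiv 2 (Fin 2 → ℂ)).symm (Matrix.toLin' M w) := rfl

lemma opNorm2_entry_le (X : Matrix (Fin 2) (Fin 2) ℂ) (i j : Fin 2) : ‖X i j‖ ≤ opNorm2 X := by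
  classical
  set w : Fin 2 → ℂ := fun k => if k = j then 1 else 0 with hw
  set v : EuclideanSpace ℂ (Fin 2) := (WithLp.equiv 2 (Fin 2 → ℂ)).symm w with hv
  have h := (Matrix.toEuclideanCLM (𝕜 := ℂ) X).le_opNorm v
  have hnv : ‖v‖ = 1 := by
    rw [hv, euclid_norm]
    fin_cases j <;> simp [hw]
  rw [hv, toEuclideanCLM_piLp_equiv_symm', euclid_norm, hnv, mul_one] at h
  have hX : Matrix.toLin' X w = fun i => X i j := by
    funext i
    rw [Matrix.toLin'_apply]
    simp only [Matrix.mulVec, dotProduct, hw, Fin.sum_univ_two]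
    fin_cases j <;> simp
  rw [hX] at h
  refine le_trans ?_ h
  fin_cases i
  · exact le_sqrt_add₁ _ _ (sq_nonneg _)
  · rw [add_comm]; exact le_sqrt_add₁ _ _ (sq_nonneg _)

lemma opNorm2_le_one_of (M : Matrix (Fin 2) (Fin 2) ℂ)
    (h : ∀ v : Fin 2 → ℂ, ‖M.mulVec v 0‖ ^ 2 + ‖M.mulVec v 1‖ ^ 2 ≤ ‖v 0‖ ^ 2 + ‖v 1‖ ^ 2) :
    opNorm2 M ≤ 1 := by
  refine ContinuousLinearMap.opNorm_le_bound _ zero_le_one (fun x => ?_)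
  set w : Fin 2 → ℂ := WithLp.equiv 2 (Fin 2 → ℂ) x with hw
  have hx : x = (WithLp.equiv 2 (Fin 2 → ℂ)).symm w := by simp [hw]
  rw [hx, toEuclideanCLM_piLp_equiv_symm', euclid_norm, euclid_norm, one_mul]
  refine Real.sqrt_le_sqrt ?_
  simpa [Matrix.toLin'_apply] using h w

lemma opNorm2_uptri100 : opNorm2 (uptri 1 0 0) ≤ 1 := by
  refine opNorm2_le_one_of _ (fun v => ?_)
  simp [uptri, Matrix.mulVec, dotProduct, Fin.sum_univ_two]

lemma opNorm2_uptri010 : opNorm2 (uptri 0 1 0) ≤ 1 := by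
  refine opNorm2_le_one_of _ (fun v => ?_)
  simp [uptri, Matrix.mulVec, dotProduct, Fin.sum_univ_two]

lemma opNorm2_uptri001 : opNorm2 (uptri 0 0 1) ≤ 1 := by
  refine opNorm2_le_one_of _ (fun v => ?_)
  simp [uptri, Matrix.mulVec, dotProduct, Fin.sum_univ_two]

lemma opNorm2_uptri101 : opNorm2 (uptri 1 0 1) ≤ 1 := by
  refine opNorm2_le_one_of _ (fun v => ?_)
  simp [uptri, Matrix.mulVec, dotProduct, Fin.sum_univ_two]


def Gam : Set (ℂ × ℂ) :=
  (fun p : ℂ × ℂ => (-(p.1 + p.2), p.1 * p.2)) '' (Metric.closedBall 0 1 ×ˢ Metric.closedBall 0 1)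

lemma mem_Gam_iff {b c : ℂ} :
    (b, c) ∈ Gam ↔ ∃ μ ν : ℂ, ‖μ‖ ≤ 1 ∧ ‖ν‖ ≤ 1 ∧ -(μ + ν) = b ∧ μ * ν = c := by
  constructor
  · rintro ⟨⟨μ, ν⟩, ⟨hμ, hν⟩, h⟩
    rw [Metric.mem_closedBall, dist_zero_right] at hμ hν
    exact ⟨μ, ν, hμ, hν, congrArg Prod.fst h, congrArg Prod.snd h⟩
  · rintro ⟨μ, ν, hμ, hν, h1, h2⟩
    exact ⟨(μ, ν), ⟨by simpa using hμ, by simpa using hν⟩, by simp [h1, h2]⟩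

lemma isCompact_Gam : IsCompact Gam :=
  ((isCompact_closedBall _ _).prod (isCompact_closedBall _ _)).image
    (by fun_prop)

lemma isClosed_Gam : IsClosed Gam := isCompact_Gam.isClosed

lemma quad_factor (b c : ℂ) : ∃ μ ν : ℂ, μ + ν = -b ∧ μ * ν = c := by
  obtain ⟨w, hw⟩ := IsAlgClosed.exists_pow_nat_eq (k := ℂ) (b ^ 2 - 4 * c) (n := 2) (by norm_num)
  exact ⟨(-b + w) / 2, (-b - w) / 2, by ring, by linear_combination (-1/4 : ℂ) * hw⟩

lemma gam_of_nonvanish {b c : ℂ}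
    (h : ∀ s : ℂ, ‖s‖ < 1 → 1 + b * s + c * s ^ 2 ≠ 0) : (b, c) ∈ Gam := by
  obtain ⟨μ, ν, hsum, hprod⟩ := quad_factor b c
  have hfac : ∀ s : ℂ, 1 + b * s + c * s ^ 2 = (1 - μ * s) * (1 - ν * s) := by
    intro s
    linear_combination (s : ℂ) * hsum - s ^ 2 * hprod
  have key : ∀ μ' ν' : ℂ, (∀ s : ℂ, 1 + b * s + c * s ^ 2 = (1 - μ' * s) * (1 - ν' * s)) →
      ‖μ'‖ ≤ 1 := by
    intro μ' ν' hf
    by_contra hgt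
    push_neg at hgt
    have hne : μ' ≠ 0 := by
      intro h0; rw [h0] at hgt; norm_num at hgt
    have hs : ‖μ'⁻¹‖ < 1 := by
      rw [norm_inv]
      rw [inv_lt_one_iff₀]
      right; exact hgt
    refine h μ'⁻¹ hs ?_
    rw [hf μ'⁻¹, mul_inv_cancel₀ hne]
    ring
  have h1 : ‖μ‖ ≤ 1 := key μ ν hfac
  have h2 : ‖ν‖ ≤ 1 := key ν μ (fun s => by rw [hfac s]; ring)
  exact mem_Gam_iff.mpr ⟨μ, ν, h1, h2, by linear_combination -hsum, hprod⟩

lemma gam_lower {b c : ℂ} (h : (b, c) ∈ Gam) (s : ℂ) (hs : ‖s‖ ≤ 1) :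
    (1 - ‖s‖) ^ 2 ≤ ‖1 + b * s + c * s ^ 2‖ := by
  obtain ⟨μ, ν, hμ, hν, h1, h2⟩ := mem_Gam_iff.mp h
  have hfac : 1 + b * s + c * s ^ 2 = (1 - μ * s) * (1 - ν * s) := by
    linear_combination (-s : ℂ) * h1 - s ^ 2 * h2
  rw [hfac, norm_mul]
  have e1 : 1 - ‖s‖ ≤ ‖1 - μ * s‖ := by
    calc 1 - ‖s‖ ≤ ‖(1:ℂ)‖ - ‖μ * s‖ := by
          rw [norm_one, norm_mul]
          nlinarith [norm_nonneg s, norm_nonneg μ]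
      _ ≤ ‖1 - μ * s‖ := norm_sub_norm_le _ _
  have e2 : 1 - ‖s‖ ≤ ‖1 - ν * s‖ := by
    calc 1 - ‖s‖ ≤ ‖(1:ℂ)‖ - ‖ν * s‖ := by
          rw [norm_one, norm_mul]
          nlinarith [norm_nonneg s, norm_nonneg ν]
      _ ≤ ‖1 - ν * s‖ := norm_sub_norm_le _ _
  have hpos : (0:ℝ) ≤ 1 - ‖s‖ := by linarith
  calc (1 - ‖s‖) ^ 2 = (1 - ‖s‖) * (1 - ‖s‖) := by ring
    _ ≤ ‖1 - μ * s‖ * ‖1 - ν * s‖ := mul_le_mul e1 e2 hpos (norm_nonneg _)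

def PS {R : Type*} [CommRing R] (b c : R) : ℕ → R
  | 0 => 2
  | 1 => -b
  | n + 2 => -b * PS b c (n + 1) - c * PS b c n

lemma PS_map {R S : Type*} [CommRing R] [CommRing S] (f : R →+* S) (b c : R) (n : ℕ) :
    f (PS b c n) = PS (f b) (f c) n := by
  induction n using Nat.strong_induction_on with
  | _ n ih =>
    match n with
    | 0 => simp [PS]; rw [show (2:R) = (1:R)+1 by norm_num]; rw [map_add, map_one]; norm_num
    | 1 => simp [PS]
    | (m + 2) =>
      rw [PS, PS]
      push_cast [map_sub, map_mul, map_neg]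
      rw [ih (m+1) (by omega), ih m (by omega)]

lemma PS_eval {R : Type*} [CommRing R] (μ ν : R) (n : ℕ) :
    PS (-(μ + ν)) (μ * ν) n = μ ^ n + ν ^ n := by
  induction n using Nat.strong_induction_on with
  | _ n ih =>
    match n with
    | 0 => simp [PS]; norm_num
    | 1 => simp [PS]
    | (m + 2) =>
      rw [PS, ih (m+1) (by omega), ih m (by omega)]
      ring

lemma exists_pow_gap {a b : ℝ} (ha : 1 < a) (hb0 : 0 ≤ b) (hba : b < a) :
    ∃ n : ℕ, 2 < a ^ n - b ^ n := by
  have ha0 : (0:ℝ) < a := by linarith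
  have hr : b / a < 1 := (div_lt_one ha0).mpr hba
  have hr0 : 0 ≤ b / a := div_nonneg hb0 ha0.le
  have h1 : Filter.Tendsto (fun n : ℕ => a ^ n) Filter.atTop Filter.atTop :=
    tendsto_pow_atTop_atTop_of_one_lt ha
  have h2 : Filter.Tendsto (fun n : ℕ => (b / a) ^ n) Filter.atTop (nhds 0) :=
    tendsto_pow_atTop_nhds_zero_of_lt_one hr0 hr
  have e1 : ∀ᶠ n : ℕ in Filter.atTop, 5 ≤ a ^ n := h1.eventually_ge_atTop 5
  have e2 : ∀ᶠ n : ℕ in Filter.atTop, (b / a) ^ n < 1 / 2 :=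
    h2.eventually_lt_const (by norm_num)
  obtain ⟨n, hn5, hnr⟩ := (e1.and e2).exists
  refine ⟨n, ?_⟩
  have hbn : b ^ n = a ^ n * (b / a) ^ n := by
    rw [div_pow]
    field_simp
  have hapos : (0:ℝ) < a ^ n := pow_pos ha0 n
  rw [hbn]
  nlinarith

-- ======== Kset ========

def Kset : Set (ℂ × ℂ × ℂ × ℂ) :=
  {q | ∀ α β γ : ℂ, opNorm2 (uptri α β γ) ≤ 1 → (bval q α β γ, cval q α γ) ∈ Gam}

lemma isClosed_Kset : IsClosed Kset := by
  have h : Kset = ⋂ (α : ℂ), ⋂ (β : ℂ), ⋂ (γ : ℂ), ⋂ (_ : opNorm2 (uptri α β γ) ≤ 1),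
      (fun q : ℂ × ℂ × ℂ × ℂ => (bval q α β γ, cval q α γ)) ⁻¹' Gam := by
    ext q
    simp [Kset, Set.mem_iInter, Set.mem_preimage]
  rw [h]
  refine isClosed_iInter fun α => isClosed_iInter fun β => isClosed_iInter fun γ =>
    isClosed_iInter fun _ => IsClosed.preimage ?_ isClosed_Gam
  unfold bval cval
  fun_prop

lemma kset_lower {q : ℂ × ℂ × ℂ × ℂ} (hq : q ∈ Kset) (X : Matrix (Fin 2) (Fin 2) ℂ)
    (h10 : X 1 0 = 0) (hX : opNorm2 X ≤ 1) : (1 - opNorm2 X) ^ 2 ≤ ‖Gq q X‖ := by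
  set t := opNorm2 X with ht
  have ht0 : 0 ≤ t := opNorm2_nonneg X
  rcases eq_or_lt_of_le ht0 with h0 | hpos
  · -- t = 0 : all entries vanish
    have hent : ∀ i j, X i j = 0 := by
      intro i j
      have := opNorm2_entry_le X i j
      rw [← ht, ← h0] at this
      exact norm_le_zero_iff.mp this
    have : Gq q X = 1 := by simp [Gq, hent]
    rw [this, ← h0]
    norm_num
  · have htne : ((t : ℂ)) ≠ 0 := by
      simpa using (ne_of_gt hpos)
    set U := uptri (X 0 0 / t) (X 0 1 / t) (X 1 1 / t) with hU
    have hXU : X = (t : ℂ) • U := by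
      rw [hU, uptri_smul]
      rw [mul_div_cancel₀ _ htne, mul_div_cancel₀ _ htne, mul_div_cancel₀ _ htne]
      exact uptri_repr X h10
    have hnt : ‖(t : ℂ)‖ = t := by
      rw [Complex.norm_real, Real.norm_eq_abs, _root_.abs_of_nonneg ht0]
    have hUnorm : opNorm2 U ≤ 1 := by
      have h1 : t = t * opNorm2 U := by
        conv_lhs => rw [ht, hXU]
        rw [opNorm2_smul, hnt]
      have h2 : t * 1 = t * opNorm2 U := by rw [mul_one]; exact h1
      rw [← mul_left_cancel₀ (ne_of_gt hpos) h2]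
    have hGam := hq _ _ _ hUnorm
    have hval : Gq q X = 1 + bval q (X 0 0 / t) (X 0 1 / t) (X 1 1 / t) * (t : ℂ)
        + cval q (X 0 0 / t) (X 1 1 / t) * (t : ℂ) ^ 2 := by
      have h3 := Gq_smul_uptri q (t : ℂ) (X 0 0 / t) (X 0 1 / t) (X 1 1 / t)
      rw [← hU, ← hXU] at h3
      exact h3
    rw [hval]
    have := gam_lower hGam (t : ℂ) (by rw [hnt]; exact hX)
    rwa [hnt] at this

lemma kset_nonvanish {q : ℂ × ℂ × ℂ × ℂ} (hq : q ∈ Kset) (X : Matrix (Fin 2) (Fin 2) ℂ)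
    (h10 : X 1 0 = 0) (hX : opNorm2 X < 1) : Gq q X ≠ 0 := by
  intro h0
  have := kset_lower hq X h10 hX.le
  rw [h0, norm_zero] at this
  nlinarith [opNorm2_nonneg X]

-- ======== hexMu ⊆ Kset ========

lemma hexMu_subset_Kset : hexMu ⊆ Kset := by
  rintro q ⟨A, hA, rfl⟩
  intro α β γ hle
  apply gam_of_nonvanish
  intro s hs
  intro hzero
  have h10 : (s • uptri α β γ) 1 0 = 0 := by simp [uptri]
  have hn : opNorm2 (s • uptri α β γ) < 1 := by
    rw [opNorm2_smul]
    calc ‖s‖ * opNorm2 (uptri α β γ) ≤ ‖s‖ * 1 :=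
          mul_le_mul_of_nonneg_left hle (norm_nonneg s)
      _ = ‖s‖ := mul_one _
      _ < 1 := hs
  have hdet : (1 - A * (s • uptri α β γ)).det = 0 := by
    rw [detFormula _ _ h10, Gq_smul_uptri]
    exact hzero
  have hmem : ENNReal.ofReal (opNorm2 (s • uptri α β γ)) ∈
      {r : ENNReal | ∃ X : Matrix (Fin 2) (Fin 2) ℂ,
        X 1 0 = 0 ∧ (1 - A * X).det = 0 ∧ r = ENNReal.ofReal (opNorm2 X)} :=
    ⟨s • uptri α β γ, h10, hdet, rfl⟩
  have hinf := sInf_le hmem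
  rw [muHexa, ENNReal.inv_lt_one] at hA
  have hlt : ENNReal.ofReal (opNorm2 (s • uptri α β γ)) < 1 := ENNReal.ofReal_lt_one.mpr hn
  exact absurd (hA.trans_le hinf) (not_lt.mpr hlt.le)

-- ======== bounds / compactness ========

lemma gam_b_le {b c : ℂ} (h : (b, c) ∈ Gam) : ‖b‖ ≤ 2 := by
  obtain ⟨μ, ν, hμ, hν, h1, _⟩ := mem_Gam_iff.mp h
  rw [← h1, norm_neg]
  calc ‖μ + ν‖ ≤ ‖μ‖ + ‖ν‖ := norm_add_le _ _
    _ ≤ 2 := by linarith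

lemma gam_c_le {b c : ℂ} (h : (b, c) ∈ Gam) : ‖c‖ ≤ 1 := by
  obtain ⟨μ, ν, hμ, hν, _, h2⟩ := mem_Gam_iff.mp h
  rw [← h2, norm_mul]
  calc ‖μ‖ * ‖ν‖ ≤ 1 * 1 := mul_le_mul hμ hν (norm_nonneg _) zero_le_one
    _ = 1 := one_mul 1

lemma kset_bounds {q : ℂ × ℂ × ℂ × ℂ} (hq : q ∈ Kset) :
    ‖q.1‖ ≤ 2 ∧ ‖q.2.1‖ ≤ 2 ∧ ‖q.2.2.1‖ ≤ 2 ∧ ‖q.2.2.2‖ ≤ 1 := by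
  refine ⟨?_, ?_, ?_, ?_⟩
  · have h := gam_b_le (hq 0 1 0 opNorm2_uptri010)
    simpa [bval] using h
  · have h := gam_b_le (hq 1 0 0 opNorm2_uptri100)
    simpa [bval] using h
  · have h := gam_b_le (hq 0 0 1 opNorm2_uptri001)
    simpa [bval] using h
  · have h := gam_c_le (hq 1 0 1 opNorm2_uptri101)
    simpa [cval] using h

lemma kset_subset_ball : Kset ⊆ Metric.closedBall 0 2 := by
  intro q hq
  obtain ⟨h1, h2, h3, h4⟩ := kset_bounds hq
  rw [Metric.mem_closedBall, dist_zero_right]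
  rw [Prod.norm_def, Prod.norm_def, Prod.norm_def]
  refine max_le h1 (max_le h2 (max_le h3 (by linarith)))

lemma isCompact_Kset : IsCompact Kset :=
  IsCompact.of_isClosed_subset (isCompact_closedBall 0 2) isClosed_Kset kset_subset_ball

-- ======== approximation: Kset ⊆ closure hexMu ========

lemma realize (a x1 x2 x3 : ℂ) (ha : a ≠ 0) :
    piMap !![x1, (x1 * x2 - x3) / a; a, x2] = (a, x1, x2, x3) := by
  simp [piMap, Matrix.det_fin_two]
  field_simp
  ring

lemma muHexa_lt_one (A : Matrix (Fin 2) (Fin 2) ℂ) (T : ℝ) (hT : 1 < T)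
    (h : ∀ X : Matrix (Fin 2) (Fin 2) ℂ, X 1 0 = 0 → (1 - A * X).det = 0 → T ≤ opNorm2 X) :
    muHexa A < 1 := by
  rw [muHexa, ENNReal.inv_lt_one]
  refine lt_of_lt_of_le (ENNReal.one_lt_ofReal.mpr hT) (le_sInf ?_)
  rintro r ⟨X, h10, hdet, rfl⟩
  exact ENNReal.ofReal_le_ofReal (h X h10 hdet)

lemma Gq_r_smul (q : ℂ × ℂ × ℂ × ℂ) (r : ℂ) (X : Matrix (Fin 2) (Fin 2) ℂ) :
    Gq q (r • X) = Gq (r * q.1, r * q.2.1, r * q.2.2.1, r ^ 2 * q.2.2.2) X := by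
  simp [Gq, Matrix.smul_apply]
  ring

lemma kset_subset_closure : Kset ⊆ closure hexMu := by
  intro q hq
  rw [Metric.mem_closure_iff]
  intro ε hε
  obtain ⟨hb1, hb2, hb3, hb4⟩ := kset_bounds hq
  set δ : ℝ := min (ε / 3) (1 / 2) with hδdef
  have hδpos : 0 < δ := lt_min (by linarith) (by norm_num)
  have hδhalf : δ ≤ 1 / 2 := min_le_right _ _
  have hδε : δ ≤ ε / 3 := min_le_left _ _
  set r : ℝ := 1 - δ with hrdef
  have hr1 : r < 1 := by simp [hrdef]; exact hδpos
  have hrhalf : 1 / 2 ≤ r := by simp [hrdef]; linarith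
  have hr0 : 0 < r := by linarith
  -- distance estimates for the scaled tail coordinates
  have hd2 : ‖(r : ℂ) * q.2.1 - q.2.1‖ ≤ 2 * δ := by
    have : (r : ℂ) * q.2.1 - q.2.1 = -((δ : ℝ) : ℂ) * q.2.1 := by
      rw [hrdef]; push_cast; ring
    rw [this, norm_mul, norm_neg, Complex.norm_real, Real.norm_eq_abs,
      _root_.abs_of_nonneg hδpos.le]
    nlinarith
  have hd3 : ‖(r : ℂ) * q.2.2.1 - q.2.2.1‖ ≤ 2 * δ := by
    have : (r : ℂ) * q.2.2.1 - q.2.2.1 = -((δ : ℝ) : ℂ) * q.2.2.1 := by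
      rw [hrdef]; push_cast; ring
    rw [this, norm_mul, norm_neg, Complex.norm_real, Real.norm_eq_abs,
      _root_.abs_of_nonneg hδpos.le]
    nlinarith
  have hd4 : ‖((r : ℂ)) ^ 2 * q.2.2.2 - q.2.2.2‖ ≤ 2 * δ := by
    have : ((r : ℂ)) ^ 2 * q.2.2.2 - q.2.2.2 = -(((1 - r ^ 2 : ℝ)) : ℂ) * q.2.2.2 := by
      push_cast; ring
    rw [this, norm_mul, norm_neg, Complex.norm_real, Real.norm_eq_abs]
    have h12 : |1 - r ^ 2| = 1 - r ^ 2 := _root_.abs_of_nonneg (by nlinarith)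
    rw [h12]
    have hr2 : 1 - r ^ 2 ≤ 2 * δ := by nlinarith [sq_nonneg δ]
    calc (1 - r ^ 2) * ‖q.2.2.2‖ ≤ (1 - r ^ 2) * 1 := by
          refine mul_le_mul_of_nonneg_left hb4 (by nlinarith)
      _ ≤ 2 * δ := by linarith
  by_cases hq1 : q.1 = 0
  · -- perturb the first coordinate by a small positive real ε'
    set T : ℝ := (1 + 1 / r) / 2 with hTdef
    have hT1 : 1 < T := by
      rw [hTdef]
      have : 1 < 1 / r := by
        rw [lt_div_iff₀ hr0]; linarith
      linarith
    have hrT : r * T = 1 - δ / 2 := by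
      rw [hTdef]
      calc r * ((1 + 1 / r) / 2) = (r + r * (1 / r)) / 2 := by ring
        _ = 1 - δ / 2 := by rw [mul_one_div_cancel hr0.ne', hrdef]; ring
    have hrT1 : r * T < 1 := by rw [hrT]; linarith
    have hTpos : 0 < T := by linarith
    set ε' : ℝ := min (ε / 3) (δ ^ 2 / (8 * T)) with hε'def
    have hε'pos : 0 < ε' := lt_min (by linarith) (by positivity)
    have hε'T : ε' * T < (δ / 2) ^ 2 := by
      have h1 : ε' ≤ δ ^ 2 / (8 * T) := min_le_right _ _
      have h2 : ε' * T ≤ δ ^ 2 / 8 := by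
        calc ε' * T ≤ (δ ^ 2 / (8 * T)) * T := mul_le_mul_of_nonneg_right h1 hTpos.le
          _ = δ ^ 2 / 8 := by field_simp
      nlinarith
    set p : ℂ × ℂ × ℂ × ℂ := ((ε' : ℂ), (r : ℂ) * q.2.1, (r : ℂ) * q.2.2.1,
      ((r : ℂ)) ^ 2 * q.2.2.2) with hpdef
    have hane : ((ε' : ℝ) : ℂ) ≠ 0 := by
      simpa using ne_of_gt hε'pos
    refine ⟨p, ?_, ?_⟩
    · -- p ∈ hexMu
      refine ⟨!![(r : ℂ) * q.2.1, ((r : ℂ) * q.2.1 * ((r : ℂ) * q.2.2.1) - ((r : ℂ)) ^ 2 * q.2.2.2) / (ε' : ℂ); (ε' : ℂ), (r : ℂ) * q.2.2.1], ?_, realize _ _ _ _ hane⟩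
      refine muHexa_lt_one _ T hT1 (fun X h10 hdet => ?_)
      by_contra hlt
      push_neg at hlt
      have hGp : Gq p X = 0 := by
        rw [detFormula _ _ h10, realize _ _ _ _ hane] at hdet
        exact hdet
      -- compare with Gq q ((r:ℂ) • X)
      have hYnorm : opNorm2 ((r : ℂ) • X) ≤ r * T := by
        rw [opNorm2_smul, Complex.norm_real, Real.norm_eq_abs, _root_.abs_of_nonneg hr0.le]
        nlinarith [opNorm2_nonneg X]
      have hYnorm1 : opNorm2 ((r : ℂ) • X) < 1 := lt_of_le_of_lt hYnorm hrT1
      have h10Y : ((r : ℂ) • X) 1 0 = 0 := by simp [Matrix.smul_apply, h10]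
      have hkey := kset_lower hq ((r : ℂ) • X) h10Y hYnorm1.le
      have hGqY : Gq q ((r : ℂ) • X) = ((ε' : ℝ) : ℂ) * X 0 1 := by
        rw [Gq_r_smul]
        have : Gq ((r : ℂ) * q.1, (r : ℂ) * q.2.1, (r : ℂ) * q.2.2.1, ((r : ℂ)) ^ 2 * q.2.2.2) X
            = Gq p X + ((ε' : ℝ) : ℂ) * X 0 1 := by
          simp [Gq, hpdef, hq1]
          ring
        rw [this, hGp, zero_add]
      rw [hGqY] at hkey
      have hub : ‖((ε' : ℝ) : ℂ) * X 0 1‖ ≤ ε' * T := by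
        rw [norm_mul, Complex.norm_real, Real.norm_eq_abs, _root_.abs_of_nonneg hε'pos.le]
        have := opNorm2_entry_le X 0 1
        nlinarith
      have hlb : (δ / 2) ^ 2 ≤ (1 - opNorm2 ((r : ℂ) • X)) ^ 2 := by
        have h1 : 1 - opNorm2 ((r : ℂ) • X) ≥ 1 - r * T := by linarith
        have h2 : (0:ℝ) < 1 - r * T := by linarith
        have h3 : 1 - r * T = δ / 2 := by rw [hrT]; ring
        have h4 : δ / 2 ≤ 1 - opNorm2 ((r : ℂ) • X) := by rw [← h3]; exact h1
        exact pow_le_pow_left₀ (by linarith) h4 2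
      linarith [hlb.trans hkey, hε'T, hub]
    · -- dist p q < ε
      rw [Prod.dist_eq, Prod.dist_eq, Prod.dist_eq]
      have d1 : dist ((ε' : ℝ) : ℂ) q.1 < ε := by
        rw [hq1, dist_zero_right, Complex.norm_real, Real.norm_eq_abs,
          _root_.abs_of_nonneg hε'pos.le]
        calc ε' ≤ ε / 3 := min_le_left _ _
          _ < ε := by linarith
      have d2 : dist ((r : ℂ) * q.2.1) q.2.1 < ε := by
        rw [dist_eq_norm]; calc ‖(r : ℂ) * q.2.1 - q.2.1‖ ≤ 2 * δ := hd2
          _ < ε := by linarith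
      have d3 : dist ((r : ℂ) * q.2.2.1) q.2.2.1 < ε := by
        rw [dist_eq_norm]; calc ‖(r : ℂ) * q.2.2.1 - q.2.2.1‖ ≤ 2 * δ := hd3
          _ < ε := by linarith
      have d4 : dist (((r : ℂ)) ^ 2 * q.2.2.2) q.2.2.2 < ε := by
        rw [dist_eq_norm]; calc ‖((r : ℂ)) ^ 2 * q.2.2.2 - q.2.2.2‖ ≤ 2 * δ := hd4
          _ < ε := by linarith
      exact max_lt (by rw [dist_comm]; exact d1)
        (max_lt (by rw [dist_comm]; exact d2)
          (max_lt (by rw [dist_comm]; exact d3) (by rw [dist_comm]; exact d4)))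
  · -- q.1 ≠ 0 : scale everything
    set p : ℂ × ℂ × ℂ × ℂ := ((r : ℂ) * q.1, (r : ℂ) * q.2.1, (r : ℂ) * q.2.2.1,
      ((r : ℂ)) ^ 2 * q.2.2.2) with hpdef
    have hane : (r : ℂ) * q.1 ≠ 0 := by
      refine mul_ne_zero ?_ hq1
      simpa using ne_of_gt hr0
    refine ⟨p, ?_, ?_⟩
    · refine ⟨!![(r : ℂ) * q.2.1, ((r : ℂ) * q.2.1 * ((r : ℂ) * q.2.2.1) - ((r : ℂ)) ^ 2 * q.2.2.2) / ((r : ℂ) * q.1); (r : ℂ) * q.1, (r : ℂ) * q.2.2.1], ?_, realize _ _ _ _ hane⟩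
      refine muHexa_lt_one _ (1 / r) (by rw [lt_div_iff₀ hr0]; linarith) (fun X h10 hdet => ?_)
      by_contra hlt
      push_neg at hlt
      have hGp : Gq p X = 0 := by
        rw [detFormula _ _ h10, realize _ _ _ _ hane] at hdet
        exact hdet
      have hGqY : Gq q ((r : ℂ) • X) = 0 := by
        rw [Gq_r_smul]
        exact hGp
      have h10Y : ((r : ℂ) • X) 1 0 = 0 := by simp [Matrix.smul_apply, h10]
      have hYnorm1 : opNorm2 ((r : ℂ) • X) < 1 := by
        rw [opNorm2_smul, Complex.norm_real, Real.norm_eq_abs, _root_.abs_of_nonneg hr0.le]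
        rw [lt_div_iff₀ hr0] at hlt
        nlinarith
      exact kset_nonvanish hq _ h10Y hYnorm1 hGqY
    · rw [Prod.dist_eq, Prod.dist_eq, Prod.dist_eq]
      have d1 : dist ((r : ℂ) * q.1) q.1 < ε := by
        rw [dist_eq_norm]
        have : (r : ℂ) * q.1 - q.1 = -((δ : ℝ) : ℂ) * q.1 := by
          rw [hrdef]; push_cast; ring
        rw [this, norm_mul, norm_neg, Complex.norm_real, Real.norm_eq_abs,
          _root_.abs_of_nonneg hδpos.le]
        nlinarith
      have d2 : dist ((r : ℂ) * q.2.1) q.2.1 < ε := by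
        rw [dist_eq_norm]; calc ‖(r : ℂ) * q.2.1 - q.2.1‖ ≤ 2 * δ := hd2
          _ < ε := by linarith
      have d3 : dist ((r : ℂ) * q.2.2.1) q.2.2.1 < ε := by
        rw [dist_eq_norm]; calc ‖(r : ℂ) * q.2.2.1 - q.2.2.1‖ ≤ 2 * δ := hd3
          _ < ε := by linarith
      have d4 : dist (((r : ℂ)) ^ 2 * q.2.2.2) q.2.2.2 < ε := by
        rw [dist_eq_norm]; calc ‖((r : ℂ)) ^ 2 * q.2.2.2 - q.2.2.2‖ ≤ 2 * δ := hd4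
          _ < ε := by linarith
      exact max_lt (by rw [dist_comm]; exact d1)
        (max_lt (by rw [dist_comm]; exact d2)
          (max_lt (by rw [dist_comm]; exact d3) (by rw [dist_comm]; exact d4)))

-- ======== polynomial convexity ========

def Bpoly (α β γ : ℂ) : MvPolynomial (Fin 4) ℂ :=
  -(MvPolynomial.C α * MvPolynomial.X 1 + MvPolynomial.C β * MvPolynomial.X 0
    + MvPolynomial.C γ * MvPolynomial.X 2)

def Cpoly (α γ : ℂ) : MvPolynomial (Fin 4) ℂ := MvPolynomial.C (α * γ) * MvPolynomial.X 3

lemma eval_Bpoly (α β γ : ℂ) (w : ℂ × ℂ × ℂ × ℂ) :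
    evalPoly4 (Bpoly α β γ) w = bval w α β γ := by
  simp [evalPoly4, Bpoly, bval]
  ring

lemma eval_Cpoly (α γ : ℂ) (w : ℂ × ℂ × ℂ × ℂ) :
    evalPoly4 (Cpoly α γ) w = cval w α γ := by
  simp [evalPoly4, Cpoly, cval]
  ring

lemma polyConvex_Kset : PolyConvex Kset := by
  intro z hz
  simp only [Kset, Set.mem_setOf_eq, not_forall] at hz
  obtain ⟨α, β, γ, hU, hnot⟩ := hz
  -- the quadratic 1 + b₀ s + c₀ s² has a zero in the open disc
  have hzero : ∃ s : ℂ, ‖s‖ < 1 ∧ 1 + bval z α β γ * s + cval z α γ * s ^ 2 = 0 := by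
    by_contra hno
    push_neg at hno
    exact hnot (gam_of_nonvanish (fun s hs => hno s hs))
  obtain ⟨s₀, hs₀, hzero⟩ := hzero
  -- factor and find a root of the reversed quadratic outside the closed disc
  obtain ⟨μ₀, ν₀, hsum₀, hprod₀⟩ := quad_factor (bval z α β γ) (cval z α γ)
  have hfac : (1 - μ₀ * s₀) * (1 - ν₀ * s₀) = 0 := by
    rw [← hzero]
    linear_combination (-s₀ : ℂ) * hsum₀ + s₀ ^ 2 * hprod₀
  have key : ∃ μ ν : ℂ, μ + ν = -(bval z α β γ) ∧ μ * ν = cval z α γ ∧ 1 < ‖μ‖ := by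
    have hbig : ∀ μ : ℂ, 1 - μ * s₀ = 0 → 1 < ‖μ‖ := by
      intro μ hμ
      have h1 : μ * s₀ = 1 := by linear_combination -hμ
      have h2 : ‖μ‖ * ‖s₀‖ = 1 := by rw [← norm_mul, h1, norm_one]
      by_contra hle
      push_neg at hle
      nlinarith [norm_nonneg μ, norm_nonneg s₀]
    rcases mul_eq_zero.mp hfac with h | h
    · exact ⟨μ₀, ν₀, hsum₀, hprod₀, hbig _ h⟩
    · exact ⟨ν₀, μ₀, by rw [add_comm]; exact hsum₀, by rw [mul_comm]; exact hprod₀, hbig _ h⟩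
  obtain ⟨μ, ν, hsum, hprod, hμ⟩ := key
  by_cases hc : 1 < ‖cval z α γ‖
  · refine ⟨Cpoly α γ, fun w hw => ?_, ?_⟩
    · rw [eval_Cpoly]
      exact gam_c_le (hw α β γ hU)
    · rw [eval_Cpoly]; exact hc
  · push_neg at hc
    have hν : ‖ν‖ < 1 := by
      have h1 : ‖μ‖ * ‖ν‖ = ‖cval z α γ‖ := by rw [← norm_mul, hprod]
      by_contra hge
      push_neg at hge
      nlinarith
    obtain ⟨n, hn⟩ := exists_pow_gap hμ (norm_nonneg ν) (hν.trans hμ)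
    refine ⟨MvPolynomial.C (1 / 2 : ℂ) * PS (Bpoly α β γ) (Cpoly α γ) n, fun w hw => ?_, ?_⟩
    · -- bound on Kset
      obtain ⟨μ', ν', hμ', hν', h1', h2'⟩ := mem_Gam_iff.mp (hw α β γ hU)
      have heval : evalPoly4 (MvPolynomial.C (1 / 2 : ℂ) * PS (Bpoly α β γ) (Cpoly α γ) n) w
          = (1 / 2 : ℂ) * (μ' ^ n + ν' ^ n) := by
        rw [evalPoly4, map_mul, MvPolynomial.eval_C]
        congr 1
        rw [PS_map (MvPolynomial.eval ![w.1, w.2.1, w.2.2.1, w.2.2.2]) _ _ n]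
        have e1 : MvPolynomial.eval ![w.1, w.2.1, w.2.2.1, w.2.2.2] (Bpoly α β γ)
            = -(μ' + ν') := by
          rw [show MvPolynomial.eval ![w.1, w.2.1, w.2.2.1, w.2.2.2] (Bpoly α β γ)
              = evalPoly4 (Bpoly α β γ) w from rfl, eval_Bpoly, h1']
        have e2 : MvPolynomial.eval ![w.1, w.2.1, w.2.2.1, w.2.2.2] (Cpoly α γ) = μ' * ν' := by
          rw [show MvPolynomial.eval ![w.1, w.2.1, w.2.2.1, w.2.2.2] (Cpoly α γ)
              = evalPoly4 (Cpoly α γ) w from rfl, eval_Cpoly, h2']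
        rw [e1, e2, PS_eval]
      rw [heval, norm_mul]
      have : ‖μ' ^ n + ν' ^ n‖ ≤ 2 := by
        calc ‖μ' ^ n + ν' ^ n‖ ≤ ‖μ' ^ n‖ + ‖ν' ^ n‖ := norm_add_le _ _
          _ = ‖μ'‖ ^ n + ‖ν'‖ ^ n := by rw [norm_pow, norm_pow]
          _ ≤ 1 + 1 := add_le_add (pow_le_one₀ (norm_nonneg _) hμ')
              (pow_le_one₀ (norm_nonneg _) hν')
          _ = 2 := by norm_num
      have h12 : ‖(1 / 2 : ℂ)‖ = 1 / 2 := by norm_num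
      rw [h12]
      linarith
  -- value at z
    · have heval : evalPoly4 (MvPolynomial.C (1 / 2 : ℂ) * PS (Bpoly α β γ) (Cpoly α γ) n) z
          = (1 / 2 : ℂ) * (μ ^ n + ν ^ n) := by
        rw [evalPoly4, map_mul, MvPolynomial.eval_C]
        congr 1
        rw [PS_map (MvPolynomial.eval ![z.1, z.2.1, z.2.2.1, z.2.2.2]) _ _ n]
        have e1 : MvPolynomial.eval ![z.1, z.2.1, z.2.2.1, z.2.2.2] (Bpoly α β γ)
            = -(μ + ν) := by
          rw [show MvPolynomial.eval ![z.1, z.2.1, z.2.2.1, z.2.2.2] (Bpoly α β γ)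
              = evalPoly4 (Bpoly α β γ) z from rfl, eval_Bpoly]
          linear_combination hsum
        have e2 : MvPolynomial.eval ![z.1, z.2.1, z.2.2.1, z.2.2.2] (Cpoly α γ) = μ * ν := by
          rw [show MvPolynomial.eval ![z.1, z.2.1, z.2.2.1, z.2.2.2] (Cpoly α γ)
              = evalPoly4 (Cpoly α γ) z from rfl, eval_Cpoly]
          exact hprod.symm
        rw [e1, e2, PS_eval]
      rw [heval, norm_mul]
      have hlow : ‖μ‖ ^ n - ‖ν‖ ^ n ≤ ‖μ ^ n + ν ^ n‖ := by
        calc ‖μ‖ ^ n - ‖ν‖ ^ n = ‖μ ^ n‖ - ‖ν ^ n‖ := by rw [norm_pow, norm_pow]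
          _ ≤ ‖μ ^ n + ν ^ n‖ := by
              have h6 := norm_add_le (μ ^ n + ν ^ n) (-(ν ^ n))
              simp only [add_neg_cancel_right, norm_neg] at h6
              linarith
      have h12 : ‖(1 / 2 : ℂ)‖ = 1 / 2 := by norm_num
      rw [h12]
      linarith


/-- `closure ℍ_μ` is compact and polynomially convex. -/
theorem stmt7 : IsCompact (closure hexMu) ∧ PolyConvex (closure hexMu) := by
  have hcl : closure hexMu = Kset :=
    subset_antisymm (closure_minimal hexMu_subset_Kset isClosed_Kset) kset_subset_closure
  rw [hcl]
  exact ⟨isCompact_Kset, polyConvex_Kset⟩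
end
end

section
/- There exists A = (a_{ij}) ∈ M₂(ℂ) with a₂₁ ≠ 0 and μ_hexa(A) < ‖A‖. Moreover ℍ_N ⊆ ℍ_μ, and ℍ_μ \ ℍ_N contains a nonempty open subset of ℂ⁴; in particular ℍ_N is a proper subset of ℍ_μ. -/
noncomputable section

open Complex

lemma coord_le_norm (x : EuclideanSpace ℂ (Fin 2)) (i : Fin 2) : ‖x i‖ ≤ ‖x‖ := by
  rw [EuclideanSpace.norm_eq,
    show ‖x i‖ = Real.sqrt (‖x i‖^2) from (Real.sqrt_sq (norm_nonneg _)).symm]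
  apply Real.sqrt_le_sqrt
  fin_cases i <;> simp [Fin.sum_univ_two]

lemma entry_le_opNorm2 (A : Matrix (Fin 2) (Fin 2) ℂ) (i j : Fin 2) :
    ‖A i j‖ ≤ opNorm2 A := by
  have h := (Matrix.toEuclideanCLM (𝕜 := ℂ) A).le_opNorm (EuclideanSpace.single j 1)
  have hv : ‖(EuclideanSpace.single j (1:ℂ))‖ = 1 := by simp
  rw [hv, mul_one] at h
  refine le_trans ?_ (le_trans (coord_le_norm _ i) h)
  have : (Matrix.toEuclideanCLM (𝕜 := ℂ) A (EuclideanSpace.single j 1)) i = A i j := by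
    rw [show (EuclideanSpace.single j (1:ℂ)) = (WithLp.equiv _ _).symm (Pi.single j 1) from rfl]
    rw [WithLp.equiv_symm_apply, Matrix.toEuclideanCLM_toLp]
    simp [Matrix.mulVec_single]
  rw [this]

lemma one_le_opNorm2_of_det (M : Matrix (Fin 2) (Fin 2) ℂ) (h : (1 - M).det = 0) :
    1 ≤ opNorm2 M := by
  have hM : ¬ IsUnit (1 - M) := by
    rw [Matrix.isUnit_iff_isUnit_det, h]; exact not_isUnit_zero
  have hs : (1 : ℂ) ∈ spectrum ℂ (Matrix.toEuclideanCLM (𝕜 := ℂ) M) := by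
    rw [spectrum.mem_iff]
    intro hu
    exact hM (by simpa [map_sub, map_one] using hu.map (Matrix.toEuclideanCLM (𝕜 := ℂ)).symm)
  simpa [opNorm2] using spectrum.norm_le_norm_of_mem hs

lemma det_one_sub_mul (A X : Matrix (Fin 2) (Fin 2) ℂ) (hX : X 1 0 = 0) :
    (1 - A * X).det = 1 - A 0 0 * X 0 0 - A 1 0 * X 0 1 - A 1 1 * X 1 1
      + A.det * (X 0 0 * X 1 1) := by
  simp [Matrix.det_fin_two, Matrix.mul_apply, Fin.sum_univ_two, Matrix.sub_apply,
    Matrix.one_apply, hX]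
  ring

lemma muHexa_lt_one_of_bounds (A : Matrix (Fin 2) (Fin 2) ℂ)
    (h1 : ‖A 0 0‖ ≤ 1/100) (h2 : ‖A 1 0‖ ≤ 11/100) (h3 : ‖A 1 1‖ ≤ 1/100)
    (h4 : ‖A.det‖ ≤ 21/100) : muHexa A < 1 := by
  unfold muHexa
  rw [ENNReal.inv_lt_one]
  refine lt_of_lt_of_le (b := ENNReal.ofReal (9/5)) ?_ (le_sInf ?_)
  · rw [← ENNReal.ofReal_one, ENNReal.ofReal_lt_ofReal_iff (by norm_num)]; norm_num
  · rintro r ⟨X, hX0, hdet, rfl⟩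
    refine ENNReal.ofReal_le_ofReal ?_
    by_contra hcon
    push_neg at hcon
    rw [det_one_sub_mul A X hX0] at hdet
    have heq : (1 : ℂ) = A 0 0 * X 0 0 + A 1 0 * X 0 1 + A 1 1 * X 1 1
        - A.det * (X 0 0 * X 1 1) := by linear_combination hdet
    have hne := congrArg norm heq
    rw [norm_one] at hne
    have hb : ‖A 0 0 * X 0 0 + A 1 0 * X 0 1 + A 1 1 * X 1 1 - A.det * (X 0 0 * X 1 1)‖
        ≤ ‖A 0 0‖ * ‖X 0 0‖ + ‖A 1 0‖ * ‖X 0 1‖ + ‖A 1 1‖ * ‖X 1 1‖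
          + ‖A.det‖ * (‖X 0 0‖ * ‖X 1 1‖) := by
      have hb0 : ‖A 0 0 * X 0 0 + A 1 0 * X 0 1 + A 1 1 * X 1 1 - A.det * (X 0 0 * X 1 1)‖
          ≤ ‖A 0 0 * X 0 0‖ + ‖A 1 0 * X 0 1‖ + ‖A 1 1 * X 1 1‖ + ‖A.det * (X 0 0 * X 1 1)‖ := by
        calc ‖A 0 0 * X 0 0 + A 1 0 * X 0 1 + A 1 1 * X 1 1 - A.det * (X 0 0 * X 1 1)‖
            ≤ ‖A 0 0 * X 0 0 + A 1 0 * X 0 1 + A 1 1 * X 1 1‖ + ‖A.det * (X 0 0 * X 1 1)‖ :=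
              norm_sub_le _ _
          _ ≤ (‖A 0 0 * X 0 0 + A 1 0 * X 0 1‖ + ‖A 1 1 * X 1 1‖) + ‖A.det * (X 0 0 * X 1 1)‖ := by
              gcongr; exact norm_add_le _ _
          _ ≤ ((‖A 0 0 * X 0 0‖ + ‖A 1 0 * X 0 1‖) + ‖A 1 1 * X 1 1‖) + ‖A.det * (X 0 0 * X 1 1)‖ := by
              gcongr; exact norm_add_le _ _
      simpa only [norm_mul] using hb0
    have e00 := entry_le_opNorm2 X 0 0
    have e01 := entry_le_opNorm2 X 0 1
    have e11 := entry_le_opNorm2 X 1 1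
    have hX00 := norm_nonneg (X 0 0)
    have hX01 := norm_nonneg (X 0 1)
    have hX11 := norm_nonneg (X 1 1)
    have hA00 := norm_nonneg (A 0 0)
    have hA10 := norm_nonneg (A 1 0)
    have hA11 := norm_nonneg (A 1 1)
    have hAd := norm_nonneg A.det
    have r00 : ‖X 0 0‖ ≤ 9/5 := le_of_lt (lt_of_le_of_lt e00 hcon)
    have r01 : ‖X 0 1‖ ≤ 9/5 := le_of_lt (lt_of_le_of_lt e01 hcon)
    have r11 : ‖X 1 1‖ ≤ 9/5 := le_of_lt (lt_of_le_of_lt e11 hcon)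
    have k1 : ‖A 0 0‖ * ‖X 0 0‖ ≤ (1/100)*(9/5) := mul_le_mul h1 r00 hX00 (by norm_num)
    have k2 : ‖A 1 0‖ * ‖X 0 1‖ ≤ (11/100)*(9/5) := mul_le_mul h2 r01 hX01 (by norm_num)
    have k3 : ‖A 1 1‖ * ‖X 1 1‖ ≤ (1/100)*(9/5) := mul_le_mul h3 r11 hX11 (by norm_num)
    have k4 : ‖X 0 0‖ * ‖X 1 1‖ ≤ (9/5)*(9/5) := mul_le_mul r00 r11 hX11 (by norm_num)
    have k5 : ‖A.det‖ * (‖X 0 0‖ * ‖X 1 1‖) ≤ (21/100)*((9/5)*(9/5)) :=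
      mul_le_mul h4 k4 (by positivity) (by norm_num)
    linarith


lemma hexN_subset_hexMu : hexN ⊆ hexMu := by
  rintro q ⟨A, hA, rfl⟩
  refine ⟨A, ?_, rfl⟩
  unfold muHexa
  rw [ENNReal.inv_lt_one]
  rcases Set.eq_empty_or_nonempty
      {r : ENNReal | ∃ X : Matrix (Fin 2) (Fin 2) ℂ,
        X 1 0 = 0 ∧ (1 - A * X).det = 0 ∧ r = ENNReal.ofReal (opNorm2 X)} with hS | hS
  · rw [hS, sInf_empty]; exact ENNReal.one_lt_top
  · obtain ⟨r₀, X₀, _, hdet₀, _⟩ := hS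
    have key : ∀ X : Matrix (Fin 2) (Fin 2) ℂ, (1 - A * X).det = 0 →
        1 ≤ opNorm2 A * opNorm2 X := by
      intro X hdet
      refine le_trans (one_le_opNorm2_of_det _ hdet) ?_
      rw [opNorm2, map_mul]
      exact norm_mul_le _ _
    have hApos : 0 < opNorm2 A := by
      by_contra hc
      push_neg at hc
      have := key X₀ hdet₀
      have hX0n : 0 ≤ opNorm2 X₀ := norm_nonneg _
      nlinarith
    refine lt_of_lt_of_le (b := ENNReal.ofReal (opNorm2 A)⁻¹) ?_ (le_sInf ?_)
    · rw [← ENNReal.ofReal_one, ENNReal.ofReal_lt_ofReal_iff (by positivity)]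
      exact (one_lt_inv₀ hApos).2 hA
    · rintro r ⟨X, hX0, hdet, rfl⟩
      refine ENNReal.ofReal_le_ofReal ?_
      have h1 := key X hdet
      have hmul := mul_inv_cancel₀ (ne_of_gt hApos)
      nlinarith

lemma norm_c (x : ℚ) : ‖((x : ℝ) : ℂ)‖ = |(x : ℝ)| := Complex.norm_real _

theorem stmt8' :
    (∃ A : Matrix (Fin 2) (Fin 2) ℂ,
      A 1 0 ≠ 0 ∧ muHexa A < ENNReal.ofReal (opNorm2 A)) ∧
    hexN ⊆ hexMu ∧
    (∃ U : Set (ℂ × ℂ × ℂ × ℂ), IsOpen U ∧ U.Nonempty ∧ U ⊆ hexMu \ hexN) ∧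
    hexN ⊂ hexMu := by
  have h110 : ‖(1/10 : ℂ)‖ = 1/10 := by rw [norm_div, norm_one]; norm_num
  have h15 : ‖(1/5 : ℂ)‖ = 1/5 := by rw [norm_div, norm_one]; norm_num
  -- the open set
  set U : Set (ℂ × ℂ × ℂ × ℂ) :=
    {q | ‖q.1 - 1/10‖ < 1/100 ∧ ‖q.2.1‖ < 1/100 ∧ ‖q.2.2.1‖ < 1/100 ∧
      ‖q.2.2.2 + 1/5‖ < 1/100} with hU
  have hUopen : IsOpen U := by
    have o1 : IsOpen {q : ℂ × ℂ × ℂ × ℂ | ‖q.1 - 1/10‖ < 1/100} :=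
      isOpen_lt (by fun_prop) continuous_const
    have o2 : IsOpen {q : ℂ × ℂ × ℂ × ℂ | ‖q.2.1‖ < 1/100} :=
      isOpen_lt (by fun_prop) continuous_const
    have o3 : IsOpen {q : ℂ × ℂ × ℂ × ℂ | ‖q.2.2.1‖ < 1/100} :=
      isOpen_lt (by fun_prop) continuous_const
    have o4 : IsOpen {q : ℂ × ℂ × ℂ × ℂ | ‖q.2.2.2 + 1/5‖ < 1/100} :=
      isOpen_lt (by fun_prop) continuous_const
    exact o1.inter (o2.inter (o3.inter o4))
  have hUne : U.Nonempty := by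
    refine ⟨(1/10, 0, 0, -(1/5)), ?_, ?_, ?_, ?_⟩ <;> simp
  have hUsub : U ⊆ hexMu \ hexN := by
    rintro ⟨p, s1, s2, d⟩ ⟨hp, hs1, hs2, hd⟩
    simp only at hp hs1 hs2 hd
    have hpn : ‖p‖ ≤ 11/100 := by
      have h := norm_add_le (p - 1/10) (1/10 : ℂ)
      rw [sub_add_cancel, h110] at h
      linarith
    have hplow : (9:ℝ)/100 ≤ ‖p‖ := by
      have h := norm_sub_le (p - 1/10) p
      have h2 : (p - 1/10) - p = -(1/10) := by ring
      rw [h2, norm_neg, h110] at h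
      linarith
    have hp0 : p ≠ 0 := by
      intro h; rw [h, norm_zero] at hplow; linarith
    have hdn : ‖d‖ ≤ 21/100 := by
      have h := norm_sub_le (d + 1/5) (1/5 : ℂ)
      rw [add_sub_cancel_right, h15] at h
      linarith
    have hdlow : (19:ℝ)/100 ≤ ‖d‖ := by
      have h := norm_sub_le (d + 1/5) d
      rw [add_sub_cancel_left, h15] at h
      linarith
    have hdet : (!![s1, (s1*s2 - d)/p; p, s2]).det = d := by
      rw [Matrix.det_fin_two_of, div_mul_cancel₀ _ hp0]; ring
    constructor
    · refine ⟨!![s1, (s1*s2 - d)/p; p, s2], ?_, ?_⟩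
      · refine muHexa_lt_one_of_bounds _ ?_ ?_ ?_ ?_
        · simpa using le_of_lt hs1
        · simpa using hpn
        · simpa using le_of_lt hs2
        · rw [hdet]; exact hdn
      · simp [piMap, hdet]
    · rintro ⟨B, hB, hpi⟩
      simp only [piMap, Prod.mk.injEq] at hpi
      obtain ⟨e1, e2, e3, e4⟩ := hpi
      have hdf : B 0 0 * B 1 1 - B 0 1 * B 1 0 = d := by
        rw [← Matrix.det_fin_two]; exact e4
      rw [e1, e2, e3] at hdf
      have hkey : B 0 1 * p = s1 * s2 - d := by linear_combination -hdf
      have hnorm : ‖B 0 1‖ * ‖p‖ = ‖s1 * s2 - d‖ := by rw [← norm_mul, hkey]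
      have hb01 : ‖B 0 1‖ ≤ opNorm2 B := entry_le_opNorm2 B 0 1
      have htr : ‖d‖ ≤ ‖s1 * s2‖ + ‖s1 * s2 - d‖ := by
        have h := norm_sub_le (s1 * s2) (s1 * s2 - d)
        rw [sub_sub_cancel] at h
        linarith
      rw [norm_mul] at htr
      have k1 : ‖s1‖ * ‖s2‖ ≤ (1/100) * (1/100) :=
        mul_le_mul (le_of_lt hs1) (le_of_lt hs2) (norm_nonneg _) (by norm_num)
      have k2 : ‖B 0 1‖ * ‖p‖ ≤ 1 * (11/100) :=
        mul_le_mul (le_of_lt (lt_of_le_of_lt hb01 hB)) hpn (norm_nonneg _) (by norm_num)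
      linarith
  have hmemU : (((1:ℂ)/10, (0:ℂ), (0:ℂ), -((1:ℂ)/5)) : ℂ × ℂ × ℂ × ℂ) ∈ U := by
    refine ⟨?_, ?_, ?_, ?_⟩ <;> simp
  have hmem := hUsub hmemU
  refine ⟨?_, hexN_subset_hexMu, ⟨U, hUopen, hUne, hUsub⟩, ?_⟩
  · refine ⟨!![0, 2; 1/10, 0], ?_, ?_⟩
    · norm_num
    · have hdetA : (!![(0:ℂ), 2; 1/10, 0]).det = -(2/10) := by
        rw [Matrix.det_fin_two_of]; ring
      have hmu : muHexa !![(0:ℂ), 2; 1/10, 0] < 1 := by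
        refine muHexa_lt_one_of_bounds _ ?_ ?_ ?_ ?_
        · simp
        · rw [show (!![(0:ℂ), 2; 1/10, 0]) 1 0 = 1/10 by simp, h110]; norm_num
        · simp
        · rw [hdetA, norm_neg, show ‖(2/10:ℂ)‖ = 2/10 by rw [norm_div]; simp]
          norm_num
      have hop : (2:ℝ) ≤ opNorm2 !![(0:ℂ), 2; 1/10, 0] := by
        have h := entry_le_opNorm2 !![(0:ℂ), 2; 1/10, 0] 0 1
        simpa using h
      refine lt_of_lt_of_le hmu ?_
      rw [← ENNReal.ofReal_one]
      exact ENNReal.ofReal_le_ofReal (by linarith)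
  · rw [Set.ssubset_def]
    exact ⟨hexN_subset_hexMu, fun hle => hmem.2 (hle hmem.1)⟩

/-- `μ_hexa < ‖·‖` is possible with `a₂₁ ≠ 0`; `ℍ_N ⊆ ℍ_μ`;
`ℍ_μ \ ℍ_N` contains a nonempty open set; `ℍ_N ⊊ ℍ_μ`. -/
theorem stmt8 :
    (∃ A : Matrix (Fin 2) (Fin 2) ℂ,
      A 1 0 ≠ 0 ∧ muHexa A < ENNReal.ofReal (opNorm2 A)) ∧
    hexN ⊆ hexMu ∧
    (∃ U : Set (ℂ × ℂ × ℂ × ℂ), IsOpen U ∧ U.Nonempty ∧ U ⊆ hexMu \ hexN) ∧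
    hexN ⊂ hexMu := by
  exact stmt8'
end
end

section
/- If (a, x₁, x₂, x₃) ∈ closure(ℍ) then |a|² + |x₁|² ≤ 1 and |a|² + |x₂|² ≤ 1; if moreover (a, x₁, x₂, x₃) ∈ ℍ then |a|² + |x₁|² < 1. Furthermore, for (x₁, x₂, x₃) ∈ b𝔼 and a ∈ ℂ, one has (a, x₁, x₂, x₃) ∈ closure(ℍ) if and only if |a|² + |x₁|² ≤ 1. -/
noncomputable section

open Complex

lemma diff_sq (β w : ℂ) : ‖1 - β*w‖^2 - ‖(starRingEnd ℂ) β - w‖^2 = (1-‖β‖^2)*(1-‖w‖^2) := by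
  simp only [Complex.sq_norm, Complex.normSq_apply, Complex.sub_re,
    Complex.sub_im, Complex.one_re, Complex.one_im, Complex.mul_re, Complex.mul_im,
    Complex.conj_re, Complex.conj_im]
  ring

lemma real_key {A B r : ℝ} (hB : 0 ≤ B) (hr0 : 0 ≤ r) (hr : r ≤ 1) (hBA : B ≤ A) :
    Real.sqrt ((A^2-B^2)*(1-r^2)) ≤ A - r*B := by
  have h1 : 0 ≤ A - r*B := by nlinarith
  have h2 : (A^2-B^2)*(1-r^2) ≤ (A-r*B)^2 := by nlinarith [sq_nonneg (r*A-B)]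
  calc Real.sqrt ((A^2-B^2)*(1-r^2)) ≤ Real.sqrt ((A-r*B)^2) := Real.sqrt_le_sqrt h2
  _ = A - r*B := Real.sqrt_sq h1

lemma D_lower {β τ w₁ w₂ : ℂ} (hτ : ‖τ‖ = 1) (hβ : ‖β‖ ≤ 1) (h1 : ‖w₁‖ ≤ 1) (h2 : ‖w₂‖ ≤ 1) :
    (1 - ‖w₁‖) * ‖1 - β*w₂‖ ≤ ‖1 - (starRingEnd ℂ) β * τ * w₁ - β * w₂ + τ * w₁ * w₂‖ ∧
    Real.sqrt (1-‖β‖^2) * (Real.sqrt (1-‖w₁‖^2) * Real.sqrt (1-‖w₂‖^2)) ≤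
      ‖1 - (starRingEnd ℂ) β * τ * w₁ - β * w₂ + τ * w₁ * w₂‖ := by
  set A := ‖1 - β*w₂‖ with hA
  set B := ‖(starRingEnd ℂ) β - w₂‖ with hBdef
  set r := ‖w₁‖ with hrdef
  have hd : (1 : ℂ) - (starRingEnd ℂ) β * τ * w₁ - β * w₂ + τ * w₁ * w₂
      = (1 - β*w₂) - τ * w₁ * ((starRingEnd ℂ) β - w₂) := by ring
  have hAB : ‖1 - (starRingEnd ℂ) β * τ * w₁ - β * w₂ + τ * w₁ * w₂‖ ≥ A - r * B := by
    rw [hd]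
    calc A - r * B = ‖1 - β*w₂‖ - ‖τ * w₁ * ((starRingEnd ℂ) β - w₂)‖ := by
          rw [norm_mul, norm_mul, hτ]; ring
    _ ≤ _ := norm_sub_norm_le _ _
  have hdiff : A^2 - B^2 = (1-‖β‖^2)*(1-‖w₂‖^2) := diff_sq β w₂
  have hBA : B ≤ A := by
    nlinarith [norm_nonneg ((starRingEnd ℂ) β - w₂), norm_nonneg (1 - β*w₂),
      mul_nonneg (sub_nonneg.2 hβ) (sub_nonneg.2 h2),
      mul_nonneg (mul_nonneg (sub_nonneg.2 hβ) (norm_nonneg β)) (sub_nonneg.2 h2),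
      mul_nonneg (mul_nonneg (sub_nonneg.2 h2) (norm_nonneg w₂)) (sub_nonneg.2 hβ)]
  constructor
  · calc (1 - r) * A = A - r * A := by ring
    _ ≤ A - r * B := by nlinarith [norm_nonneg w₁]
    _ ≤ _ := hAB
  · have key : Real.sqrt ((A^2-B^2)*(1-r^2)) ≤ A - r*B :=
      real_key (norm_nonneg _) (norm_nonneg _) h1 hBA
    have e1 : Real.sqrt (1-‖β‖^2) * (Real.sqrt (1-r^2) * Real.sqrt (1-‖w₂‖^2))
        = Real.sqrt ((A^2-B^2)*(1-r^2)) := by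
      rw [hdiff, show (1-‖β‖^2)*(1-‖w₂‖^2)*(1-r^2) = (1-‖β‖^2)*((1-r^2)*(1-‖w₂‖^2)) by ring,
        Real.sqrt_mul (by nlinarith [norm_nonneg β]),
        Real.sqrt_mul (by nlinarith [norm_nonneg w₁])]
    rw [e1]
    exact key.trans hAB

lemma hexDen_cont (x : ℂ × ℂ × ℂ) : Continuous fun p : ℂ × ℂ => ‖hexDen x p.1 p.2‖ := by
  unfold hexDen; fun_prop

lemma bdd_psi {q : ℂ × ℂ × ℂ × ℂ} (hq : q.2 ∈ tetrablock) :
    BddAbove {r : ℝ | ∃ z₁ z₂ : ℂ, ‖z₁‖ < 1 ∧ ‖z₂‖ < 1 ∧ r = ‖psi z₁ z₂ q‖} := by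
  have hK : IsCompact ((Metric.closedBall (0:ℂ) 1) ×ˢ (Metric.closedBall (0:ℂ) 1)) :=
    (isCompact_closedBall _ _).prod (isCompact_closedBall _ _)
  have hne : ((Metric.closedBall (0:ℂ) 1) ×ˢ (Metric.closedBall (0:ℂ) 1)).Nonempty :=
    ⟨(0,0), by simp⟩
  obtain ⟨p₀, hp₀, hmin⟩ := hK.exists_isMinOn hne (hexDen_cont q.2).continuousOn
  have hp₀1 : ‖p₀.1‖ ≤ 1 := by
    have := hp₀.1; simpa [Metric.mem_closedBall, dist_eq_norm] using this
  have hp₀2 : ‖p₀.2‖ ≤ 1 := by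
    have := hp₀.2; simpa [Metric.mem_closedBall, dist_eq_norm] using this
  have hc : 0 < ‖hexDen q.2 p₀.1 p₀.2‖ :=
    norm_pos_iff.2 (hq p₀.1 p₀.2 hp₀1 hp₀2)
  refine ⟨‖q.1‖ / ‖hexDen q.2 p₀.1 p₀.2‖, ?_⟩
  rintro r ⟨z₁, z₂, h1, h2, rfl⟩
  have hzK : (z₁, z₂) ∈ (Metric.closedBall (0:ℂ) 1) ×ˢ (Metric.closedBall (0:ℂ) 1) := by
    constructor <;> simp [Metric.mem_closedBall, dist_eq_norm] <;> [exact h1.le; exact h2.le]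
  have hden := hmin hzK
  have hnum : ‖q.1 * ((Real.sqrt ((1 - ‖z₁‖ ^ 2) * (1 - ‖z₂‖ ^ 2)) : ℝ) : ℂ)‖ ≤ ‖q.1‖ := by
    rw [norm_mul, Complex.norm_real, Real.norm_eq_abs,
      _root_.abs_of_nonneg (Real.sqrt_nonneg _)]
    have : Real.sqrt ((1 - ‖z₁‖ ^ 2) * (1 - ‖z₂‖ ^ 2)) ≤ 1 := by
      apply Real.sqrt_le_one.mpr
      have a1 : (0:ℝ) ≤ 1 - ‖z₁‖^2 := by nlinarith [norm_nonneg z₁]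
      have a2 : (0:ℝ) ≤ 1 - ‖z₂‖^2 := by nlinarith [norm_nonneg z₂]
      nlinarith [mul_nonneg (sq_nonneg ‖z₁‖) a2, sq_nonneg ‖z₂‖]
    nlinarith [norm_nonneg q.1]
  unfold psi
  rw [norm_div]
  exact div_le_div₀ (norm_nonneg _) hnum hc hden

lemma inv_point (w : ℂ) (h : 1 ≤ ‖w‖) : ‖(starRingEnd ℂ) w / (‖w‖^2 : ℂ)‖ ≤ 1 ∧
    w * ((starRingEnd ℂ) w / (‖w‖^2 : ℂ)) = 1 := by
  have hn : (0:ℝ) < ‖w‖ := lt_of_lt_of_le one_pos h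
  have hcne : ((‖w‖^2 : ℝ) : ℂ) ≠ 0 := Complex.ofReal_ne_zero.mpr (by positivity)
  have hkey : ((Complex.normSq w : ℝ) : ℂ) = ((‖w‖^2 : ℝ) : ℂ) := by
    rw [Complex.normSq_eq_norm_sq]
  constructor
  · rw [norm_div, RCLike.norm_conj]
    have h2 : ‖((‖w‖^2 : ℝ) : ℂ)‖ = ‖w‖^2 := by
      rw [Complex.norm_real, Real.norm_eq_abs, _root_.abs_of_nonneg (sq_nonneg _)]
    rw [show ((‖w‖:ℝ)^2 : ℂ) = (((‖w‖^2:ℝ)) : ℂ) by push_cast; ring, h2,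
      div_le_one (by positivity)]
    nlinarith
  · rw [show ((‖w‖:ℝ)^2 : ℂ) = (((‖w‖^2:ℝ)) : ℂ) by push_cast; ring,
      mul_div_assoc', Complex.mul_conj, hkey, div_self hcne]

lemma tetra_norm_lt {x : ℂ × ℂ × ℂ} (hx : x ∈ tetrablock) : ‖x.1‖ < 1 ∧ ‖x.2.1‖ < 1 := by
  constructor
  · by_contra h
    push_neg at h
    obtain ⟨hz, he⟩ := inv_point x.1 h
    apply hx ((starRingEnd ℂ) x.1 / (‖x.1‖^2 : ℂ)) 0 hz (by simp)
    unfold hexDen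
    rw [he]; ring
  · by_contra h
    push_neg at h
    obtain ⟨hz, he⟩ := inv_point x.2.1 h
    apply hx 0 ((starRingEnd ℂ) x.2.1 / (‖x.2.1‖^2 : ℂ)) (by simp) hz
    unfold hexDen
    rw [he]; ring

lemma sq_lt_of_ratio {na u : ℝ} (hna : 0 ≤ na) (hu : 0 < u) (h : na * Real.sqrt u / u < 1) :
    na^2 < u := by
  rw [div_lt_one hu] at h
  have hs : Real.sqrt u ^ 2 = u := Real.sq_sqrt hu.le
  have hsp : 0 < Real.sqrt u := Real.sqrt_pos.2 hu
  nlinarith [h, hs, hsp, hna]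

lemma hex_strict {q : ℂ × ℂ × ℂ × ℂ} (hq : q ∈ hexablock) :
    ‖q.1‖^2 + ‖q.2.1‖^2 < 1 ∧ ‖q.1‖^2 + ‖q.2.2.1‖^2 < 1 := by
  obtain ⟨ht, hs⟩ := hq
  obtain ⟨h₁, h₂⟩ := tetra_norm_lt ht
  constructor
  · set u : ℝ := 1 - ‖q.2.1‖^2 with hu
    have hupos : 0 < u := by nlinarith [norm_nonneg q.2.1]
    have hmem : ‖psi ((starRingEnd ℂ) q.2.1) 0 q‖ ∈
        {r : ℝ | ∃ z₁ z₂ : ℂ, ‖z₁‖ < 1 ∧ ‖z₂‖ < 1 ∧ r = ‖psi z₁ z₂ q‖} :=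
      ⟨(starRingEnd ℂ) q.2.1, 0, by simpa using h₁, by simp, rfl⟩
    have hle : ‖psi ((starRingEnd ℂ) q.2.1) 0 q‖ < 1 :=
      lt_of_le_of_lt (le_csSup (bdd_psi ht) hmem) hs
    have hden : hexDen q.2 ((starRingEnd ℂ) q.2.1) 0 = ((u : ℝ) : ℂ) := by
      unfold hexDen
      rw [Complex.mul_conj, Complex.normSq_eq_norm_sq]
      push_cast [hu]; ring
    have hval : ‖psi ((starRingEnd ℂ) q.2.1) 0 q‖ = ‖q.1‖ * Real.sqrt u / u := by
      unfold psi
      rw [hden, norm_div, norm_mul, Complex.norm_real, Complex.norm_real,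
        Real.norm_eq_abs, Real.norm_eq_abs, _root_.abs_of_nonneg (Real.sqrt_nonneg _),
        _root_.abs_of_nonneg hupos.le]
      congr 2
      rw [RCLike.norm_conj]
      simp [hu]
    rw [hval] at hle
    have := sq_lt_of_ratio (norm_nonneg q.1) hupos hle
    nlinarith
  · set u : ℝ := 1 - ‖q.2.2.1‖^2 with hu
    have hupos : 0 < u := by nlinarith [norm_nonneg q.2.2.1]
    have hmem : ‖psi 0 ((starRingEnd ℂ) q.2.2.1) q‖ ∈
        {r : ℝ | ∃ z₁ z₂ : ℂ, ‖z₁‖ < 1 ∧ ‖z₂‖ < 1 ∧ r = ‖psi z₁ z₂ q‖} :=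
      ⟨0, (starRingEnd ℂ) q.2.2.1, by simp, by simpa using h₂, rfl⟩
    have hle : ‖psi 0 ((starRingEnd ℂ) q.2.2.1) q‖ < 1 :=
      lt_of_le_of_lt (le_csSup (bdd_psi ht) hmem) hs
    have hden : hexDen q.2 0 ((starRingEnd ℂ) q.2.2.1) = ((u : ℝ) : ℂ) := by
      unfold hexDen
      rw [Complex.mul_conj, Complex.normSq_eq_norm_sq]
      push_cast [hu]; ring
    have hval : ‖psi 0 ((starRingEnd ℂ) q.2.2.1) q‖ = ‖q.1‖ * Real.sqrt u / u := by
      unfold psi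
      rw [hden, norm_div, norm_mul, Complex.norm_real, Complex.norm_real,
        Real.norm_eq_abs, Real.norm_eq_abs, _root_.abs_of_nonneg (Real.sqrt_nonneg _),
        _root_.abs_of_nonneg hupos.le]
      congr 2
      rw [RCLike.norm_conj]
      simp [hu]
    rw [hval] at hle
    have := sq_lt_of_ratio (norm_nonneg q.1) hupos hle
    nlinarith

set_option maxHeartbeats 1600000 in
lemma scaled_mem {a x₁ x₂ x₃ : ℂ} (hx : x₁ = (starRingEnd ℂ) x₂ * x₃) (hτ : ‖x₃‖ = 1)
    (hβ : ‖x₂‖ ≤ 1) (ha : ‖a‖^2 + ‖x₁‖^2 ≤ 1) {t : ℝ} (h0 : 0 ≤ t) (h1 : t < 1) :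
    ((t:ℂ)*a, (t:ℂ)*x₁, (t:ℂ)*x₂, ((t:ℂ))^2*x₃) ∈ hexablock := by
  have hx12 : ‖x₁‖ = ‖x₂‖ := by rw [hx, norm_mul, RCLike.norm_conj, hτ, mul_one]
  have han : ‖a‖ ≤ Real.sqrt (1 - ‖x₂‖^2) := by
    have h' : ‖a‖^2 ≤ 1 - ‖x₂‖^2 := by nlinarith [hx12, ha]
    calc ‖a‖ = Real.sqrt (‖a‖^2) := (Real.sqrt_sq (norm_nonneg a)).symm
    _ ≤ _ := Real.sqrt_le_sqrt h' 
  have hwnorm : ∀ z : ℂ, ‖(t:ℂ)*z‖ = t * ‖z‖ := by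
    intro z; rw [norm_mul, Complex.norm_real, Real.norm_eq_abs, _root_.abs_of_nonneg h0]
  have hDeq : ∀ z₁ z₂ : ℂ, hexDen ((t:ℂ)*x₁, (t:ℂ)*x₂, ((t:ℂ))^2*x₃) z₁ z₂
      = 1 - (starRingEnd ℂ) x₂ * x₃ * ((t:ℂ)*z₁) - x₂ * ((t:ℂ)*z₂) + x₃ * ((t:ℂ)*z₁) * ((t:ℂ)*z₂) := by
    intro z₁ z₂; unfold hexDen; rw [hx]; ring
  have hDpos : ∀ z₁ z₂ : ℂ, ‖z₁‖ ≤ 1 → ‖z₂‖ ≤ 1 →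
      0 < ‖hexDen ((t:ℂ)*x₁, (t:ℂ)*x₂, ((t:ℂ))^2*x₃) z₁ z₂‖ := by
    intro z₁ z₂ hz₁ hz₂
    have hw₁ : ‖(t:ℂ)*z₁‖ ≤ 1 := by rw [hwnorm]; nlinarith [norm_nonneg z₁]
    have hw₂ : ‖(t:ℂ)*z₂‖ ≤ 1 := by rw [hwnorm]; nlinarith [norm_nonneg z₂]
    have := (D_lower (β := x₂) (τ := x₃) (w₁ := (t:ℂ)*z₁) (w₂ := (t:ℂ)*z₂) hτ hβ hw₁ hw₂).1
    rw [hDeq]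
    have hA : 1 - t ≤ ‖1 - x₂ * ((t:ℂ)*z₂)‖ := by
      calc 1 - t ≤ 1 - ‖x₂ * ((t:ℂ)*z₂)‖ := by
            rw [norm_mul, hwnorm]
            nlinarith [mul_nonneg h0 (norm_nonneg z₂),
              mul_le_mul hβ (mul_le_mul_of_nonneg_left hz₂ h0)
                (mul_nonneg h0 (norm_nonneg z₂)) zero_le_one]
      _ ≤ ‖1 - x₂ * ((t:ℂ)*z₂)‖ := by
            calc 1 - ‖x₂ * ((t:ℂ)*z₂)‖ = ‖(1:ℂ)‖ - ‖x₂ * ((t:ℂ)*z₂)‖ := by simp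
            _ ≤ _ := norm_sub_norm_le _ _
    have hr : 1 - t ≤ 1 - ‖(t:ℂ)*z₁‖ := by rw [hwnorm]; nlinarith [norm_nonneg z₁]
    calc (0:ℝ) < (1-t)*(1-t) := by nlinarith
    _ ≤ (1 - ‖(t:ℂ)*z₁‖) * ‖1 - x₂ * ((t:ℂ)*z₂)‖ := by
        apply mul_le_mul hr hA (by linarith) (by nlinarith [hwnorm z₁, norm_nonneg z₁])
    _ ≤ _ := this
  constructor
  · intro z₁ z₂ hz₁ hz₂
    exact norm_pos_iff.1 (hDpos z₁ z₂ hz₁ hz₂)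
  · apply lt_of_le_of_lt (b := t) _ h1
    apply Real.sSup_le _ h0
    rintro r ⟨z₁, z₂, hz₁, hz₂, rfl⟩
    have hDp := hDpos z₁ z₂ hz₁.le hz₂.le
    show ‖((t:ℂ)*a) * ((Real.sqrt ((1 - ‖z₁‖ ^ 2) * (1 - ‖z₂‖ ^ 2)) : ℝ) : ℂ) /
      hexDen ((t:ℂ)*x₁, (t:ℂ)*x₂, ((t:ℂ))^2*x₃) z₁ z₂‖ ≤ t
    rw [norm_div, div_le_iff₀ hDp, norm_mul, norm_mul, Complex.norm_real,
      Complex.norm_real, Real.norm_eq_abs, Real.norm_eq_abs,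
      _root_.abs_of_nonneg (Real.sqrt_nonneg _), _root_.abs_of_nonneg h0]
    have hw₁ : ‖(t:ℂ)*z₁‖ ≤ 1 := by rw [hwnorm]; nlinarith [norm_nonneg z₁]
    have hw₂ : ‖(t:ℂ)*z₂‖ ≤ 1 := by rw [hwnorm]; nlinarith [norm_nonneg z₂]
    have hkey := (D_lower (β := x₂) (τ := x₃) (w₁ := (t:ℂ)*z₁) (w₂ := (t:ℂ)*z₂) hτ hβ hw₁ hw₂).2
    rw [← hDeq] at hkey
    have hsplit : Real.sqrt ((1 - ‖z₁‖^2) * (1 - ‖z₂‖^2))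
        = Real.sqrt (1 - ‖z₁‖^2) * Real.sqrt (1 - ‖z₂‖^2) :=
      Real.sqrt_mul (by nlinarith [norm_nonneg z₁]) _
    have hmono1 : Real.sqrt (1 - ‖z₁‖^2) ≤ Real.sqrt (1 - ‖(t:ℂ)*z₁‖^2) := by
      apply Real.sqrt_le_sqrt; rw [hwnorm]
      nlinarith [sq_nonneg ‖z₁‖,
        mul_le_mul_of_nonneg_right (show t^2 ≤ 1 by nlinarith) (sq_nonneg ‖z₁‖)]
    have hmono2 : Real.sqrt (1 - ‖z₂‖^2) ≤ Real.sqrt (1 - ‖(t:ℂ)*z₂‖^2) := by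
      apply Real.sqrt_le_sqrt; rw [hwnorm]
      nlinarith [sq_nonneg ‖z₂‖,
        mul_le_mul_of_nonneg_right (show t^2 ≤ 1 by nlinarith) (sq_nonneg ‖z₂‖)]
    calc t * ‖a‖ * Real.sqrt ((1 - ‖z₁‖^2) * (1 - ‖z₂‖^2))
        ≤ t * (Real.sqrt (1-‖x₂‖^2) * (Real.sqrt (1 - ‖(t:ℂ)*z₁‖^2) * Real.sqrt (1 - ‖(t:ℂ)*z₂‖^2))) := by
          rw [hsplit]
          have hprod : ‖a‖ * (Real.sqrt (1 - ‖z₁‖^2) * Real.sqrt (1 - ‖z₂‖^2))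
              ≤ Real.sqrt (1-‖x₂‖^2) * (Real.sqrt (1 - ‖(t:ℂ)*z₁‖^2) * Real.sqrt (1 - ‖(t:ℂ)*z₂‖^2)) := by
            gcongr <;> first
              | exact norm_nonneg a
              | positivity
          calc t * ‖a‖ * (Real.sqrt (1 - ‖z₁‖^2) * Real.sqrt (1 - ‖z₂‖^2))
              = t * (‖a‖ * (Real.sqrt (1 - ‖z₁‖^2) * Real.sqrt (1 - ‖z₂‖^2))) := by ring
          _ ≤ _ := mul_le_mul_of_nonneg_left hprod h0
    _ ≤ t * ‖hexDen ((t:ℂ)*x₁, (t:ℂ)*x₂, ((t:ℂ))^2*x₃) z₁ z₂‖ :=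
        mul_le_mul_of_nonneg_left hkey h0

lemma closure_sub : ∀ q ∈ closure hexablock,
    ‖q.1‖ ^ 2 + ‖q.2.1‖ ^ 2 ≤ 1 ∧ ‖q.1‖ ^ 2 + ‖q.2.2.1‖ ^ 2 ≤ 1 := by
  have hC : IsClosed {q : ℂ × ℂ × ℂ × ℂ | ‖q.1‖^2+‖q.2.1‖^2 ≤ 1 ∧ ‖q.1‖^2+‖q.2.2.1‖^2 ≤ 1} := by
    have c1 : Continuous fun q : ℂ × ℂ × ℂ × ℂ => ‖q.1‖^2 + ‖q.2.1‖^2 := by fun_prop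
    have c2 : Continuous fun q : ℂ × ℂ × ℂ × ℂ => ‖q.1‖^2 + ‖q.2.2.1‖^2 := by fun_prop
    exact (isClosed_le c1 continuous_const).inter (isClosed_le c2 continuous_const)
  have hsub : hexablock ⊆ {q : ℂ × ℂ × ℂ × ℂ | ‖q.1‖^2+‖q.2.1‖^2 ≤ 1 ∧ ‖q.1‖^2+‖q.2.2.1‖^2 ≤ 1} :=
    fun q hq => ⟨(hex_strict hq).1.le, (hex_strict hq).2.le⟩
  exact fun q hq => closure_minimal hsub hC hq

/-- Bounds `|a|² + |x₁|² ≤ 1` and `|a|² + |x₂|² ≤ 1` on `closure ℍ`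
(strict for `ℍ`), and the characterization over `b𝔼`. -/
theorem stmt13 :
    (∀ q ∈ closure hexablock,
      ‖q.1‖ ^ 2 + ‖q.2.1‖ ^ 2 ≤ 1 ∧ ‖q.1‖ ^ 2 + ‖q.2.2.1‖ ^ 2 ≤ 1) ∧
    (∀ q ∈ hexablock, ‖q.1‖ ^ 2 + ‖q.2.1‖ ^ 2 < 1) ∧
    (∀ a x₁ x₂ x₃ : ℂ, (x₁, x₂, x₃) ∈ bE →
      ((a, x₁, x₂, x₃) ∈ closure hexablock ↔ ‖a‖ ^ 2 + ‖x₁‖ ^ 2 ≤ 1)) := by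
  refine ⟨closure_sub, fun q hq => (hex_strict hq).1, fun a x₁ x₂ x₃ hb => ?_⟩
  obtain ⟨hbe, hb3, hb2⟩ : x₁ = (starRingEnd ℂ) x₂ * x₃ ∧ ‖x₃‖ = 1 ∧ ‖x₂‖ ≤ 1 := hb
  constructor
  · intro h
    exact (closure_sub _ h).1
  · intro hle
    have ha1 : ‖a‖ ≤ 1 := by nlinarith [norm_nonneg a, sq_nonneg ‖x₁‖]
    have hx11 : ‖x₁‖ ≤ 1 := by nlinarith [norm_nonneg x₁, sq_nonneg ‖a‖]
    have hd : ∀ (w : ℂ) (s : ℝ), ‖w‖ ≤ 1 → 0 ≤ s → s ≤ 1 → dist w ((s:ℂ)*w) ≤ 1 - s := by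
      intro w s hw hs0 hs1
      rw [dist_eq_norm]
      calc ‖w - (s:ℂ)*w‖ = ‖((1-s:ℝ):ℂ)*w‖ := by congr 1; push_cast; ring
      _ = (1-s)*‖w‖ := by
          rw [norm_mul, Complex.norm_real, Real.norm_eq_abs, _root_.abs_of_nonneg (by linarith)]
      _ ≤ 1-s := by nlinarith [norm_nonneg w]
    apply Metric.mem_closure_iff.mpr
    intro ε hε
    set t : ℝ := max (1 - ε/4) 0 with htdef
    have h0 : 0 ≤ t := le_max_right _ _
    have ht1 : t < 1 := max_lt (by linarith) one_pos
    have htε : 1 - t ≤ ε/4 := by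
      have : 1 - ε/4 ≤ t := le_max_left _ _
      linarith
    refine ⟨((t:ℂ)*a, (t:ℂ)*x₁, (t:ℂ)*x₂, ((t:ℂ))^2*x₃),
      scaled_mem hbe hb3 hb2 hle h0 ht1, ?_⟩
    have d1 := hd a t ha1 h0 ht1.le
    have d2 := hd x₁ t hx11 h0 ht1.le
    have d3 := hd x₂ t hb2 h0 ht1.le
    have d4 : dist x₃ ((t:ℂ)^2*x₃) ≤ 1 - t^2 := by
      have := hd x₃ (t^2) hb3.le (by positivity) (by nlinarith)
      rw [show (((t^2 : ℝ)):ℂ) = ((t:ℂ))^2 by push_cast; ring] at this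
      exact this
    have hmax : dist ((a, x₁, x₂, x₃) : ℂ × ℂ × ℂ × ℂ) ((t:ℂ)*a, (t:ℂ)*x₁, (t:ℂ)*x₂, ((t:ℂ))^2*x₃)
        = max (dist a ((t:ℂ)*a)) (max (dist x₁ ((t:ℂ)*x₁)) (max (dist x₂ ((t:ℂ)*x₂))
          (dist x₃ ((t:ℂ)^2*x₃)))) := by
      rw [Prod.dist_eq, Prod.dist_eq, Prod.dist_eq]
    rw [hmax]
    have h2t : 1 - t^2 ≤ 2*(1-t) := by nlinarith
    apply max_lt (by linarith) (max_lt (by linarith) (max_lt (by linarith) (by linarith)))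
end
end

section
/- ℍ_p = {π(U) : U ∈ M₂(ℂ) unitary} satisfies the following three descriptions: ℍ_p = {(a, x₁, x₂, x₃) ∈ ℂ⁴ : (x₁, x₂, x₃) ∈ b𝔼 and |a|² + |x₁|² = 1} = {(a, x₁, x₂, x₃) ∈ closure(ℍ_N) : |x₃| = 1} = {(−η·z, w, η·conj(w), η) : z, w ∈ ℂ with |z|² + |w|² = 1, η ∈ 𝕋}. -/
noncomputable section

open Complex

set_option synthInstance.maxHeartbeats 1000000

local notation "E2" => Matrix.toEuclideanCLM (𝕜 := ℂ) (n := Fin 2)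


lemma cmul (z : ℂ) : (starRingEnd ℂ) z * z = ((‖z‖^2 : ℝ) : ℂ) := by
  rw [RCLike.conj_mul]; norm_cast

lemma E2_single (A : Matrix (Fin 2) (Fin 2) ℂ) (j : Fin 2) :
    (E2 A (EuclideanSpace.single j 1)) = (fun i => A i j) := by
  have : (EuclideanSpace.single j (1:ℂ)) = (WithLp.equiv 2 _).symm (Pi.single j 1) := rfl
  rw [this, WithLp.equiv_symm_apply, Matrix.toEuclideanCLM_toLp]
  funext i
  simp [Matrix.toLin'_apply, Matrix.mulVec_single]

lemma eucl_norm_sq (x : EuclideanSpace ℂ (Fin 2)) : ‖x‖^2 = ‖x 0‖^2 + ‖x 1‖^2 := by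
  rw [EuclideanSpace.norm_eq, Real.sq_sqrt (by positivity)]
  simp [Fin.sum_univ_two]

lemma col_le (A : Matrix (Fin 2) (Fin 2) ℂ) (h : opNorm2 A ≤ 1) (j : Fin 2) :
    ‖A 0 j‖^2 + ‖A 1 j‖^2 ≤ 1 := by
  have h1 : ‖E2 A (EuclideanSpace.single j 1)‖ ≤ 1 := by
    calc ‖E2 A (EuclideanSpace.single j 1)‖ ≤ ‖E2 A‖ * ‖EuclideanSpace.single j (1:ℂ)‖ :=
          (E2 A).le_opNorm _
      _ ≤ 1 := by rw [EuclideanSpace.norm_single]; simpa [opNorm2] using h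
  have h2 := eucl_norm_sq (E2 A (EuclideanSpace.single j 1))
  have c0 : (E2 A (EuclideanSpace.single j 1)) 0 = A 0 j := by rw [E2_single]
  have c1 : (E2 A (EuclideanSpace.single j 1)) 1 = A 1 j := by rw [E2_single]
  rw [c0, c1] at h2
  nlinarith [norm_nonneg (E2 A (EuclideanSpace.single j 1))]

lemma unitary_of_opNorm_det (A : Matrix (Fin 2) (Fin 2) ℂ) (h1 : opNorm2 A ≤ 1)
    (h2 : ‖A.det‖ = 1) : A ∈ Matrix.unitaryGroup (Fin 2) ℂ := by
  set a := A 0 0 with ha; set b := A 0 1 with hb; set c := A 1 0 with hc; set d := A 1 1 with hd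
  have hdet : A.det = a * d - b * c := by simp [Matrix.det_fin_two]; rfl
  set β : ℂ := (starRingEnd ℂ) a * b + (starRingEnd ℂ) c * d with hβ
  have key : ((‖A.det‖^2 : ℝ) : ℂ) =
      ((starRingEnd ℂ) a * a + (starRingEnd ℂ) c * c) *
        ((starRingEnd ℂ) b * b + (starRingEnd ℂ) d * d) - (starRingEnd ℂ) β * β := by
    rw [← cmul, hdet, hβ]
    simp only [map_sub, _root_.map_mul, map_add, Complex.conj_conj]
    ring
  have keyR : (1:ℝ) = (‖a‖^2 + ‖c‖^2) * (‖b‖^2 + ‖d‖^2) - ‖β‖^2 := by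
    have := key
    rw [cmul a, cmul b, cmul, cmul, cmul, h2] at this
    exact_mod_cast (by push_cast at this ⊢; linear_combination this :
      ((1:ℝ) : ℂ) = ((‖a‖^2 + ‖c‖^2) * (‖b‖^2 + ‖d‖^2) - ‖β‖^2 : ℝ))
  have hP := col_le A h1 0
  have hQ := col_le A h1 1
  rw [← ha, ← hc] at hP
  rw [← hb, ← hd] at hQ
  have hβ0 : β = 0 := by
    have h3 : ‖β‖^2 ≤ 0 := by nlinarith [norm_nonneg a, norm_nonneg b, norm_nonneg c, norm_nonneg d, sq_nonneg (‖a‖), sq_nonneg (‖b‖), sq_nonneg (‖c‖), sq_nonneg (‖d‖)]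
    have h4 : ‖β‖ = 0 := by nlinarith [norm_nonneg β]
    exact norm_eq_zero.mp h4
  have hP1 : ‖a‖^2 + ‖c‖^2 = 1 := by
    rw [hβ0, norm_zero] at keyR
    nlinarith [sq_nonneg (‖a‖), sq_nonneg (‖c‖), sq_nonneg (‖b‖), sq_nonneg (‖d‖), norm_nonneg a, norm_nonneg b, norm_nonneg c, norm_nonneg d]
  have hQ1 : ‖b‖^2 + ‖d‖^2 = 1 := by
    rw [hβ0, norm_zero] at keyR
    nlinarith [sq_nonneg (‖a‖), sq_nonneg (‖c‖), sq_nonneg (‖b‖), sq_nonneg (‖d‖), norm_nonneg a, norm_nonneg b, norm_nonneg c, norm_nonneg d]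
  rw [Matrix.mem_unitaryGroup_iff']
  ext i j
  fin_cases i <;> fin_cases j <;>
    simp [Matrix.mul_apply, Fin.sum_univ_two, Matrix.star_apply, Matrix.one_apply]
  · rw [← ha, ← hc, cmul a, cmul c, ← Complex.ofReal_add]
    exact_mod_cast congrArg (Complex.ofReal) hP1
  · rw [← ha, ← hb, ← hc, ← hd]; exact hβ0
  · have h5 := congrArg (starRingEnd ℂ) hβ0
    simp only [hβ, map_add, _root_.map_mul, Complex.conj_conj, map_zero] at h5
    rw [← ha, ← hb, ← hc, ← hd]
    linear_combination h5
  · rw [← hb, ← hd, cmul b, cmul d, ← Complex.ofReal_add]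
    exact_mod_cast congrArg (Complex.ofReal) hQ1

lemma norm_eq_one_of_conj_mul {η : ℂ} (h : (starRingEnd ℂ) η * η = 1) : ‖η‖ = 1 := by
  rw [cmul] at h
  have : ‖η‖^2 = 1 := by exact_mod_cast h
  nlinarith [norm_nonneg η]

lemma unitary_param (U : Matrix (Fin 2) (Fin 2) ℂ) (hU : U ∈ Matrix.unitaryGroup (Fin 2) ℂ) :
    ∃ z w η : ℂ, ‖z‖^2 + ‖w‖^2 = 1 ∧ ‖η‖ = 1 ∧
      (U 1 0, U 0 0, U 1 1, U.det) = (-(η * z), w, η * (starRingEnd ℂ) w, η) := by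
  set a := U 0 0 with ha; set b := U 0 1 with hb; set c := U 1 0 with hc; set d := U 1 1 with hd
  rw [Matrix.mem_unitaryGroup_iff'] at hU
  have E00 : (starRingEnd ℂ) a * a + (starRingEnd ℂ) c * c = 1 := by
    have := congrFun (congrFun hU 0) 0
    simpa [Matrix.mul_apply, Fin.sum_univ_two, Matrix.star_apply, Matrix.one_apply] using this
  have E01 : (starRingEnd ℂ) a * b + (starRingEnd ℂ) c * d = 0 := by
    have := congrFun (congrFun hU 0) 1
    simpa [Matrix.mul_apply, Fin.sum_univ_two, Matrix.star_apply, Matrix.one_apply] using this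
  have E11 : (starRingEnd ℂ) b * b + (starRingEnd ℂ) d * d = 1 := by
    have := congrFun (congrFun hU 1) 1
    simpa [Matrix.mul_apply, Fin.sum_univ_two, Matrix.star_apply, Matrix.one_apply] using this
  have E01' : a * (starRingEnd ℂ) b + c * (starRingEnd ℂ) d = 0 := by
    have := congrArg (starRingEnd ℂ) E01
    simpa [map_add, _root_.map_mul] using this
  have hdet : U.det = a * d - b * c := by simp [Matrix.det_fin_two]; rfl
  set η : ℂ := a * d - b * c with hηdef
  have hηc : (starRingEnd ℂ) η * η = 1 := by
    simp only [hηdef, map_sub, _root_.map_mul]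
    linear_combination ((starRingEnd ℂ) b * b + (starRingEnd ℂ) d * d) * E00 + E11 - (a * (starRingEnd ℂ) b + c * (starRingEnd ℂ) d) * E01
  have hη1 : ‖η‖ = 1 := norm_eq_one_of_conj_mul hηc
  refine ⟨-(starRingEnd ℂ) η * c, a, η, ?_, hη1, ?_⟩
  · have h1 : ‖-(starRingEnd ℂ) η * c‖ = ‖c‖ := by
      rw [norm_mul, norm_neg, RCLike.norm_conj, hη1, one_mul]
    rw [h1]
    have : ((‖a‖^2 + ‖c‖^2 : ℝ) : ℂ) = 1 := by
      rw [Complex.ofReal_add, ← cmul, ← cmul]; linear_combination E00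
    have h2 : (‖a‖^2 + ‖c‖^2 : ℝ) = 1 := by exact_mod_cast this
    linarith
  · have hcc : -(η * (-(starRingEnd ℂ) η * c)) = c := by
      linear_combination c * hηc
    have hdd : d = η * (starRingEnd ℂ) a := by
      simp only [hηdef, map_sub, _root_.map_mul]
      linear_combination c * E01 - d * E00
    rw [Prod.mk.injEq, Prod.mk.injEq, Prod.mk.injEq]
    exact ⟨by rw [hcc], rfl, by rw [← hdd], hdet⟩

lemma unitary_opNorm (U : Matrix (Fin 2) (Fin 2) ℂ) (hU : U ∈ Matrix.unitaryGroup (Fin 2) ℂ) :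
    opNorm2 U = 1 := by
  have h1 : star (E2 U) * E2 U = 1 := by
    rw [← map_star, ← _root_.map_mul]
    rw [Matrix.mem_unitaryGroup_iff'] at hU
    rw [hU, _root_.map_one]
  have h2 := CStarRing.norm_star_mul_self (x := E2 U)
  rw [h1, norm_one] at h2
  unfold opNorm2
  nlinarith [norm_nonneg (E2 U), sq_nonneg (‖E2 U‖ - 1), sq_nonneg (‖E2 U‖ + 1)]

lemma E2_continuous : Continuous fun A : Matrix (Fin 2) (Fin 2) ℂ => E2 A := by
  let L : Matrix (Fin 2) (Fin 2) ℂ →ₗ[ℂ] (EuclideanSpace ℂ (Fin 2) →L[ℂ] EuclideanSpace ℂ (Fin 2)) :=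
    { toFun := fun A => E2 A,
      map_add' := fun A B => map_add _ A B,
      map_smul' := fun r A => map_smul _ r A }
  exact L.continuous_of_finiteDimensional

lemma opNorm2_continuous : Continuous opNorm2 :=
  continuous_norm.comp E2_continuous

lemma isCompact_opBall : IsCompact {A : Matrix (Fin 2) (Fin 2) ℂ | opNorm2 A ≤ 1} := by
  have hclosed : IsClosed {A : Matrix (Fin 2) (Fin 2) ℂ | opNorm2 A ≤ 1} :=
    isClosed_le opNorm2_continuous continuous_const
  have hbig : IsCompact {A : Matrix (Fin 2) (Fin 2) ℂ | ∀ i j, ‖A i j‖ ≤ 1} := by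
    have : {A : Matrix (Fin 2) (Fin 2) ℂ | ∀ i j, ‖A i j‖ ≤ 1} =
        Set.pi Set.univ (fun _ : Fin 2 => Set.pi Set.univ
          (fun _ : Fin 2 => Metric.closedBall (0:ℂ) 1)) := by
      ext A
      constructor
      · intro h i _ j _
        simpa [Metric.mem_closedBall, dist_zero_right] using h i j
      · intro h i j
        simpa [Metric.mem_closedBall, dist_zero_right] using h i (Set.mem_univ i) j (Set.mem_univ j)
    rw [this]
    exact isCompact_univ_pi fun _ => isCompact_univ_pi fun _ => isCompact_closedBall _ _
  refine IsCompact.of_isClosed_subset hbig hclosed ?_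
  intro A hA i j
  have hcol := col_le A hA j
  fin_cases i
  · show ‖A 0 j‖ ≤ 1
    nlinarith [norm_nonneg (A 0 j), norm_nonneg (A 1 j), sq_nonneg (‖A 0 j‖ - 1), sq_nonneg (‖A 1 j‖)]
  · show ‖A 1 j‖ ≤ 1
    nlinarith [norm_nonneg (A 0 j), norm_nonneg (A 1 j), sq_nonneg (‖A 1 j‖ - 1), sq_nonneg (‖A 0 j‖)]


lemma piMap_continuous_aux : Continuous piMap := by
  refine Continuous.prodMk ?_ (Continuous.prodMk ?_ (Continuous.prodMk ?_ ?_))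
  · exact (continuous_apply (0 : Fin 2)).comp (continuous_apply (1 : Fin 2))
  · exact (continuous_apply (0 : Fin 2)).comp (continuous_apply (0 : Fin 2))
  · exact (continuous_apply (1 : Fin 2)).comp (continuous_apply (1 : Fin 2))
  · exact Continuous.matrix_det continuous_id

lemma unitary_det_norm (U : Matrix (Fin 2) (Fin 2) ℂ) (hU : U ∈ Matrix.unitaryGroup (Fin 2) ℂ) :
    ‖U.det‖ = 1 := by
  obtain ⟨z, w, η, _, hη, h3⟩ := unitary_param U hU
  have := congrArg (fun p : ℂ × ℂ × ℂ × ℂ => p.2.2.2) h3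
  simp only at this
  rw [this, hη]

lemma unitary_mem_closure (U : Matrix (Fin 2) (Fin 2) ℂ) (hU : U ∈ Matrix.unitaryGroup (Fin 2) ℂ) :
    piMap U ∈ closure hexN := by
  set u : ℕ → ℝ := fun n => 1 - 1/(n+1) with hu
  have hmem : ∀ n : ℕ, piMap (((u n : ℝ) : ℂ) • U) ∈ hexN := by
    intro n
    refine ⟨((u n : ℝ) : ℂ) • U, ?_, rfl⟩
    have : opNorm2 (((u n : ℝ) : ℂ) • U) = ‖((u n : ℝ) : ℂ)‖ * opNorm2 U := by
      have hs : E2 (((u n : ℝ) : ℂ) • U) = ((u n : ℝ) : ℂ) • E2 U := map_smul _ _ _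
      unfold opNorm2
      rw [hs]; exact norm_smul ((u n : ℝ) : ℂ) (E2 U)
    rw [this, unitary_opNorm U hU, mul_one, Complex.norm_real, Real.norm_eq_abs]
    have h1 : (0:ℝ) < 1/(n+1) := by positivity
    have h2 : 1/((n:ℝ)+1) ≤ 1 := by
      rw [div_le_one (by positivity)]; linarith [Nat.cast_nonneg (α := ℝ) n]
    rw [_root_.abs_of_nonneg (by simp only [hu]; linarith)]
    simp only [hu]; linarith
  have hu_t : Filter.Tendsto u Filter.atTop (nhds 1) := by
    have h := tendsto_one_div_add_atTop_nhds_zero_nat (𝕜 := ℝ)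
    have h2 := Filter.Tendsto.sub (tendsto_const_nhds (x := (1:ℝ))) h
    simp only [sub_zero] at h2
    simpa [hu, one_div] using h2
  have hcast : Filter.Tendsto (fun n => ((u n : ℝ) : ℂ)) Filter.atTop (nhds (1:ℂ)) := by
    have := (Complex.continuous_ofReal.tendsto 1).comp hu_t
    simpa [Function.comp_def] using this
  have hφ : Continuous fun c : ℂ => piMap (c • U) :=
    piMap_continuous_aux.comp (continuous_id.smul continuous_const)
  have htend : Filter.Tendsto (fun n => piMap (((u n : ℝ) : ℂ) • U)) Filter.atTop
      (nhds (piMap U)) := by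
    have := (hφ.tendsto 1).comp hcast
    simpa [Function.comp_def, one_smul] using this
  exact mem_closure_of_tendsto htend (Filter.Eventually.of_forall hmem)


lemma eq3aux : hexP = {q : ℂ × ℂ × ℂ × ℂ | ∃ z w η : ℂ, ‖z‖ ^ 2 + ‖w‖ ^ 2 = 1 ∧ ‖η‖ = 1 ∧
      q = (-(η * z), w, η * (starRingEnd ℂ) w, η)} := by
  ext q
  constructor
  · rintro ⟨U, hU, rfl⟩
    obtain ⟨z, w, η, h1, h2, h3⟩ := unitary_param U hU
    exact ⟨z, w, η, h1, h2, h3⟩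
  · rintro ⟨z, w, η, hzw, hη, rfl⟩
    have hc : (starRingEnd ℂ) z * z + (starRingEnd ℂ) w * w = 1 := by
      rw [cmul, cmul, ← Complex.ofReal_add, hzw, Complex.ofReal_one]
    have hηc : (starRingEnd ℂ) η * η = 1 := by
      rw [cmul, hη]; norm_num
    refine ⟨!![w, (starRingEnd ℂ) z; -(η * z), η * (starRingEnd ℂ) w], ?_, ?_⟩
    · rw [Matrix.mem_unitaryGroup_iff']
      ext i j
      fin_cases i <;> fin_cases j <;>
        simp [Matrix.mul_apply, Fin.sum_univ_two, Matrix.star_apply, Matrix.one_apply]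
      · linear_combination ((starRingEnd ℂ) z * z) * hηc + hc
      · linear_combination (-((starRingEnd ℂ) z * (starRingEnd ℂ) w)) * hηc
      · linear_combination (-(z * w)) * hηc
      · linear_combination ((starRingEnd ℂ) w * w) * hηc + hc
    · have hdet : (!![w, (starRingEnd ℂ) z; -(η * z), η * (starRingEnd ℂ) w] :
          Matrix (Fin 2) (Fin 2) ℂ).det = η := by
        rw [Matrix.det_fin_two_of]
        linear_combination η * hc
      unfold piMap
      rw [hdet]
      norm_num


lemma eq1aux : hexP = {q : ℂ × ℂ × ℂ × ℂ | q.2 ∈ bE ∧ ‖q.1‖ ^ 2 + ‖q.2.1‖ ^ 2 = 1} := by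
  rw [eq3aux]
  ext q
  constructor
  · rintro ⟨z, w, η, hzw, hη, rfl⟩
    have hηc : (starRingEnd ℂ) η * η = 1 := by rw [cmul, hη]; norm_num
    refine ⟨⟨?_, ?_, ?_⟩, ?_⟩
    · show w = (starRingEnd ℂ) (η * (starRingEnd ℂ) w) * η
      simp only [_root_.map_mul, Complex.conj_conj]
      linear_combination (-w) * hηc
    · exact hη
    · show ‖η * (starRingEnd ℂ) w‖ ≤ 1
      rw [norm_mul, hη, one_mul, RCLike.norm_conj]
      nlinarith [norm_nonneg w, norm_nonneg z, sq_nonneg (‖w‖ - 1)]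
    · show ‖-(η * z)‖ ^ 2 + ‖w‖ ^ 2 = 1
      rw [norm_neg, norm_mul, hη, one_mul]
      exact hzw
  · rintro ⟨⟨hq1, hq2, hq3⟩, hn⟩
    obtain ⟨a, x₁, x₂, x₃⟩ := q
    simp only at hq1 hq2 hq3 hn ⊢
    have hx₃c : (starRingEnd ℂ) x₃ * x₃ = 1 := by rw [cmul, hq2]; norm_num
    refine ⟨-(starRingEnd ℂ) x₃ * a, x₁, x₃, ?_, hq2, ?_⟩
    · have h1 : ‖-(starRingEnd ℂ) x₃ * a‖ = ‖a‖ := by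
        rw [norm_mul, norm_neg, RCLike.norm_conj, hq2, one_mul]
      rw [h1]; exact hn
    · have hq1' : (starRingEnd ℂ) x₁ = x₂ * (starRingEnd ℂ) x₃ := by
        have := congrArg (starRingEnd ℂ) hq1
        simpa [_root_.map_mul, Complex.conj_conj] using this
      have h1 : -(x₃ * (-(starRingEnd ℂ) x₃ * a)) = a := by
        linear_combination a * hx₃c
      have h2 : x₃ * (starRingEnd ℂ) x₁ = x₂ := by
        rw [hq1']
        linear_combination x₂ * hx₃c
      rw [Prod.mk.injEq, Prod.mk.injEq, Prod.mk.injEq]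
      exact ⟨h1.symm, rfl, h2.symm, rfl⟩

lemma eq2aux : hexP = {q : ℂ × ℂ × ℂ × ℂ | q ∈ closure hexN ∧ ‖q.2.2.2‖ = 1} := by
  ext q
  constructor
  · rintro ⟨U, hU, rfl⟩
    refine ⟨unitary_mem_closure U hU, ?_⟩
    show ‖U.det‖ = 1
    exact unitary_det_norm U hU
  · rintro ⟨hcl, hdet⟩
    have hsub : closure hexN ⊆ piMap '' {A | opNorm2 A ≤ 1} := by
      refine closure_minimal ?_ ((isCompact_opBall.image piMap_continuous_aux).isClosed)
      rintro p ⟨A, hA, rfl⟩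
      exact ⟨A, le_of_lt hA, rfl⟩
    obtain ⟨A, hA, rfl⟩ := hsub hcl
    exact ⟨A, unitary_of_opNorm_det A hA hdet, rfl⟩


/-- Three descriptions of `ℍ_p = π(𝒰(2))`. -/
theorem stmt15 :
    hexP = {q : ℂ × ℂ × ℂ × ℂ | q.2 ∈ bE ∧ ‖q.1‖ ^ 2 + ‖q.2.1‖ ^ 2 = 1} ∧
    hexP = {q : ℂ × ℂ × ℂ × ℂ | q ∈ closure hexN ∧ ‖q.2.2.2‖ = 1} ∧
    hexP = {q : ℂ × ℂ × ℂ × ℂ | ∃ z w η : ℂ, ‖z‖ ^ 2 + ‖w‖ ^ 2 = 1 ∧ ‖η‖ = 1 ∧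
      q = (-(η * z), w, η * (starRingEnd ℂ) w, η)} := by
  exact ⟨eq1aux, eq2aux, eq3aux⟩
end
end
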